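/- arXiv:0710.3647 — 6 statements merged into one kernel-verified Lean document; each statement's English description precedes it below -/
import Mathlib

section
/- Let P₁ be the gamma distribution with shape α₁ > 0 and scale β₁ > 0, and P₂ the gamma distribution with shape α₂ > 0 and scale β₂ > 0. Then the Kullback–Leibler divergence satisfies D(P₁‖P₂) = α₁(β₁ − β₂)/β₂ + α₂·log(β₂/β₁) + log(Γ(α₂)/Γ(α₁)) + (α₁ − α₂)·ψ(α₁), where ψ = (log Γ)′ is the digamma function. -/
open MeasureTheory Real Set

/-- The gamma distribution with shape `α` and scale `β`: the measure on `ℝ` with density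
`x ^ (α - 1) * exp (-x / β) / (Γ α * β ^ α)` on `(0, ∞)`. -/
noncomputable def gammaDist (α β : ℝ) : Measure ℝ :=
  volume.withDensity fun x =>
    ENNReal.ofReal (if x ∈ Set.Ioi (0 : ℝ) then
      x ^ (α - 1) * Real.exp (-x / β) / (Real.Gamma α * β ^ α) else 0)

/-- Kullback–Leibler divergence `D(P‖Q) = ∫ log (dP/dQ) dP`. -/
noncomputable def klDiv (P Q : Measure ℝ) : ℝ :=
  ∫ x, Real.log (P.rnDeriv Q x).toReal ∂P

/-- The digamma function `ψ = (log Γ)′`. -/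
noncomputable def digamma (x : ℝ) : ℝ :=
  deriv (fun y => Real.log (Real.Gamma y)) x

namespace KLGammaAux

open Filter
open scoped ENNReal NNReal

/-- The density of the gamma distribution, as a real function. -/
noncomputable def gpdf (α β : ℝ) (x : ℝ) : ℝ :=
  if x ∈ Set.Ioi (0 : ℝ) then
    x ^ (α - 1) * Real.exp (-x / β) / (Real.Gamma α * β ^ α) else 0

lemma gammaDist_eq (α β : ℝ) :
    gammaDist α β = volume.withDensity fun x => ENNReal.ofReal (gpdf α β x) := rfl

lemma measurable_gpdf (α β : ℝ) : Measurable (gpdf α β) := by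
  unfold gpdf
  exact Measurable.ite measurableSet_Ioi (by fun_prop) measurable_const

lemma gpdf_nonneg {α β : ℝ} (hα : 0 < α) (hβ : 0 < β) (x : ℝ) : 0 ≤ gpdf α β x := by
  unfold gpdf
  split_ifs with h
  · have hx : (0:ℝ) < x := h
    have h1 : 0 < Real.Gamma α := Real.Gamma_pos_of_pos hα
    have h2 : (0:ℝ) < β ^ α := Real.rpow_pos_of_pos hβ α
    positivity
  · exact le_rfl

lemma gpdf_pos {α β : ℝ} (hα : 0 < α) (hβ : 0 < β) {x : ℝ} (hx : 0 < x) :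
    0 < gpdf α β x := by
  unfold gpdf
  rw [if_pos (mem_Ioi.mpr hx)]
  have h1 : 0 < Real.Gamma α := Real.Gamma_pos_of_pos hα
  have h2 : (0:ℝ) < β ^ α := Real.rpow_pos_of_pos hβ α
  have h3 : (0:ℝ) < x ^ (α - 1) := Real.rpow_pos_of_pos hx _
  positivity

/-- |log x| ≤ δ⁻¹ (x^δ + x^(-δ)) for x, δ > 0. -/
lemma abs_log_le {δ x : ℝ} (hδ : 0 < δ) (hx : 0 < x) :
    |Real.log x| ≤ δ⁻¹ * (x ^ δ + x ^ (-δ)) := by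
  have h1 : Real.log (x ^ δ) = δ * Real.log x := Real.log_rpow hx δ
  have h2 : Real.log (x ^ (-δ)) = -δ * Real.log x := Real.log_rpow hx (-δ)
  have h3 : Real.log (x ^ δ) ≤ x ^ δ - 1 :=
    Real.log_le_sub_one_of_pos (Real.rpow_pos_of_pos hx δ)
  have h4 : Real.log (x ^ (-δ)) ≤ x ^ (-δ) - 1 :=
    Real.log_le_sub_one_of_pos (Real.rpow_pos_of_pos hx (-δ))
  have h5 : (0:ℝ) < x ^ δ := Real.rpow_pos_of_pos hx δ
  have h6 : (0:ℝ) < x ^ (-δ) := Real.rpow_pos_of_pos hx (-δ)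
  have hinv : (0:ℝ) ≤ δ⁻¹ := (inv_pos.mpr hδ).le
  rw [abs_le]
  constructor
  · have h := mul_le_mul_of_nonneg_left h4 hinv
    rw [h2] at h
    have heq : δ⁻¹ * (-δ * Real.log x) = -Real.log x := by field_simp
    rw [heq] at h
    nlinarith [mul_nonneg hinv h5.le]
  · have h := mul_le_mul_of_nonneg_left h3 hinv
    rw [h1] at h
    have heq : δ⁻¹ * (δ * Real.log x) = Real.log x := by field_simp
    rw [heq] at h
    nlinarith [mul_nonneg hinv h6.le]

lemma integrableOn_aux {s b : ℝ} (hs : 0 < s) (hb : 0 < b) :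
    IntegrableOn (fun x : ℝ => x ^ (s - 1) * Real.exp (-(x / b))) (Ioi 0) := by
  have h := integrableOn_rpow_mul_exp_neg_mul_rpow (p := 1) (s := s - 1) (b := b⁻¹)
    (by linarith) one_pos (inv_pos.mpr hb)
  refine h.congr_fun (fun x hx => ?_) measurableSet_Ioi
  simp only [Real.rpow_one]
  ring_nf

lemma integrableOn_log_aux {s b : ℝ} (hs : 0 < s) (hb : 0 < b) :
    IntegrableOn (fun x : ℝ => Real.log x * (x ^ (s - 1) * Real.exp (-(x / b)))) (Ioi 0) := by
  set δ : ℝ := s / 2 with hδdef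
  have hδ : 0 < δ := by positivity
  have h1 : IntegrableOn (fun x : ℝ => x ^ (s + δ - 1) * Real.exp (-(x / b))) (Ioi 0) :=
    integrableOn_aux (by linarith) hb
  have h2 : IntegrableOn (fun x : ℝ => x ^ (s - δ - 1) * Real.exp (-(x / b))) (Ioi 0) :=
    integrableOn_aux (by rw [hδdef]; linarith) hb
  have hbound : IntegrableOn
      (fun x : ℝ => δ⁻¹ * (x ^ (s + δ - 1) * Real.exp (-(x / b))
        + x ^ (s - δ - 1) * Real.exp (-(x / b)))) (Ioi 0) := (h1.add h2).const_mul _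
  refine Integrable.mono' hbound ?_ ?_
  · exact (Real.measurable_log.mul (by fun_prop)).aestronglyMeasurable
  · filter_upwards [self_mem_ae_restrict measurableSet_Ioi] with x hx
    have hx0 : (0:ℝ) < x := hx
    have hxp : (0:ℝ) < x ^ (s - 1) := Real.rpow_pos_of_pos hx0 _
    have he : (0:ℝ) < Real.exp (-(x / b)) := Real.exp_pos _
    have key : |Real.log x| ≤ δ⁻¹ * (x ^ δ + x ^ (-δ)) := abs_log_le hδ hx0
    have e1 : x ^ δ * x ^ (s - 1) = x ^ (s + δ - 1) := by
      rw [← Real.rpow_add hx0]; ring_nf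
    have e2 : x ^ (-δ) * x ^ (s - 1) = x ^ (s - δ - 1) := by
      rw [← Real.rpow_add hx0]; ring_nf
    have : ‖Real.log x * (x ^ (s - 1) * Real.exp (-(x / b)))‖
        = |Real.log x| * (x ^ (s - 1) * Real.exp (-(x / b))) := by
      rw [norm_mul, Real.norm_eq_abs, Real.norm_eq_abs,
        abs_of_pos (show (0:ℝ) < x ^ (s - 1) * Real.exp (-(x / b)) by positivity)]
    rw [this]
    calc |Real.log x| * (x ^ (s - 1) * Real.exp (-(x / b)))
        ≤ δ⁻¹ * (x ^ δ + x ^ (-δ)) * (x ^ (s - 1) * Real.exp (-(x / b))) := by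
          apply mul_le_mul_of_nonneg_right key (by positivity)
      _ = δ⁻¹ * (x ^ δ * x ^ (s - 1) * Real.exp (-(x / b))
            + x ^ (-δ) * x ^ (s - 1) * Real.exp (-(x / b))) := by ring
      _ = δ⁻¹ * (x ^ (s + δ - 1) * Real.exp (-(x / b))
            + x ^ (s - δ - 1) * Real.exp (-(x / b))) := by rw [e1, e2]

lemma integrableOn_G' {s : ℝ} (hs : 0 < s) :
    IntegrableOn (fun t : ℝ => t ^ (s - 1) * (Real.log t * Real.exp (-t))) (Ioi 0) := by
  have h := integrableOn_log_aux hs one_pos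
  refine h.congr_fun (fun x _ => ?_) measurableSet_Ioi
  simp only [div_one]; ring

/-- The basic scaled gamma integral. -/
lemma integral_aux {s b : ℝ} (hs : 0 < s) (hb : 0 < b) :
    ∫ x in Ioi (0:ℝ), x ^ (s - 1) * Real.exp (-(x / b)) = Real.Gamma s * b ^ s := by
  have key : ∫ x in Ioi (0:ℝ), x ^ (s - 1) * Real.exp (-(x / b))
      = ∫ x in Ioi (0:ℝ), b ^ (s - 1) * ((b⁻¹ * x) ^ (s - 1) * Real.exp (-(b⁻¹ * x))) := by
    refine setIntegral_congr_fun measurableSet_Ioi (fun x hx => ?_)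
    have hx0 : (0:ℝ) < x := hx
    have hbb : b ^ (s - 1) * b⁻¹ ^ (s - 1) = 1 := by
      rw [← Real.mul_rpow hb.le (inv_pos.mpr hb).le, mul_inv_cancel₀ hb.ne', Real.one_rpow]
    rw [Real.mul_rpow (inv_pos.mpr hb).le hx0.le, inv_mul_eq_div,
      show b ^ (s - 1) * (b⁻¹ ^ (s - 1) * x ^ (s - 1) * Real.exp (-(x / b)))
        = b ^ (s - 1) * b⁻¹ ^ (s - 1) * (x ^ (s - 1) * Real.exp (-(x / b))) from by ring,
      hbb, one_mul]
  rw [key, MeasureTheory.integral_const_mul,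
    MeasureTheory.integral_comp_mul_left_Ioi
      (fun y => y ^ (s - 1) * Real.exp (-y)) 0 (inv_pos.mpr hb)]
  have h0 : b⁻¹ * 0 = (0:ℝ) := by ring
  rw [h0, inv_inv, smul_eq_mul]
  have hΓ : ∫ x in Ioi (0:ℝ), x ^ (s - 1) * Real.exp (-x) = Real.Gamma s := by
    rw [Real.Gamma_eq_integral hs]
    exact setIntegral_congr_fun measurableSet_Ioi (fun x _ => by ring)
  rw [hΓ]
  have hbs : b ^ (s - 1) * b = b ^ s := by
    rw [← Real.rpow_add_one hb.ne' (s - 1)]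
    norm_num
  linear_combination Real.Gamma s * hbs

/-- Derivative of the real Gamma function as an integral. -/
lemma hasDerivAt_Gamma_integral {s : ℝ} (hs : 0 < s) :
    HasDerivAt Real.Gamma
      (∫ t in Ioi (0:ℝ), t ^ (s - 1) * (Real.log t * Real.exp (-t))) s := by
  have hc : HasDerivAt Complex.GammaIntegral
      (∫ t : ℝ in Ioi 0, (t:ℂ) ^ ((s:ℂ) - 1) * (Real.log t * Real.exp (-t))) s :=
    Complex.hasDerivAt_GammaIntegral (by simpa using hs)
  have hd : (∫ t : ℝ in Ioi 0, (t:ℂ) ^ ((s:ℂ) - 1) * (Real.log t * Real.exp (-t)))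
      = ((∫ t in Ioi (0:ℝ), t ^ (s - 1) * (Real.log t * Real.exp (-t)) : ℝ) : ℂ) := by
    have step : (∫ t : ℝ in Ioi 0, (t:ℂ) ^ ((s:ℂ) - 1) * (Real.log t * Real.exp (-t)))
        = ∫ t : ℝ in Ioi 0, ((t ^ (s - 1) * (Real.log t * Real.exp (-t)) : ℝ) : ℂ) := by
      refine setIntegral_congr_fun measurableSet_Ioi (fun t ht => ?_)
      have ht0 : (0:ℝ) < t := ht
      rw [show ((s:ℂ) - 1) = ((s - 1 : ℝ) : ℂ) by push_cast; ring,
        ← Complex.ofReal_cpow ht0.le]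
      push_cast
      ring
    rw [step]
    exact integral_ofReal
  have hre := hc.real_of_complex
  rw [hd, Complex.ofReal_re] at hre
  have hev : Real.Gamma =ᶠ[nhds s]
      fun x : ℝ => (Complex.GammaIntegral x).re := by
    filter_upwards [Ioi_mem_nhds hs] with x hx
    rw [Complex.GammaIntegral_ofReal, Complex.ofReal_re, Real.Gamma_eq_integral hx]
  exact hre.congr_of_eventuallyEq hev

lemma Gamma_mul_digamma {s : ℝ} (hs : 0 < s) :
    Real.Gamma s * digamma s
      = ∫ t in Ioi (0:ℝ), t ^ (s - 1) * (Real.log t * Real.exp (-t)) := by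
  have hΓ := hasDerivAt_Gamma_integral hs
  have hΓpos : 0 < Real.Gamma s := Real.Gamma_pos_of_pos hs
  have hlog : HasDerivAt (fun y => Real.log (Real.Gamma y))
      ((∫ t in Ioi (0:ℝ), t ^ (s - 1) * (Real.log t * Real.exp (-t))) / Real.Gamma s) s :=
    hΓ.log hΓpos.ne'
  have : digamma s
      = (∫ t in Ioi (0:ℝ), t ^ (s - 1) * (Real.log t * Real.exp (-t))) / Real.Gamma s := by
    unfold digamma
    exact hlog.deriv
  rw [this]
  field_simp

/-- The log-moment integral of the (unnormalized) gamma density. -/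
lemma integral_log_aux {s b : ℝ} (hs : 0 < s) (hb : 0 < b) :
    ∫ x in Ioi (0:ℝ), Real.log x * (x ^ (s - 1) * Real.exp (-(x / b)))
      = (Real.log b + digamma s) * (Real.Gamma s * b ^ s) := by
  have key : ∫ x in Ioi (0:ℝ), Real.log x * (x ^ (s - 1) * Real.exp (-(x / b)))
      = ∫ x in Ioi (0:ℝ),
          (fun y : ℝ => Real.log (b * y) * ((b * y) ^ (s - 1) * Real.exp (-y)) * b ^ (s - 1)
            * b ^ (1 - s)) (b⁻¹ * x) := by
    refine setIntegral_congr_fun measurableSet_Ioi (fun x hx => ?_)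
    have hx0 : (0:ℝ) < x := hx
    have hbx : b * (b⁻¹ * x) = x := by field_simp
    simp only [hbx]
    have hbb : b ^ (s - 1) * b ^ (1 - s) = 1 := by
      rw [← Real.rpow_add hb, show s - 1 + (1 - s) = 0 from by ring, Real.rpow_zero]
    rw [inv_mul_eq_div,
      show Real.log x * (x ^ (s - 1) * Real.exp (-(x / b))) * b ^ (s - 1) * b ^ (1 - s)
        = Real.log x * (x ^ (s - 1) * Real.exp (-(x / b))) * (b ^ (s - 1) * b ^ (1 - s))
        from by ring,
      hbb, mul_one]
  rw [key, MeasureTheory.integral_comp_mul_left_Ioi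
    (fun y : ℝ => Real.log (b * y) * ((b * y) ^ (s - 1) * Real.exp (-y)) * b ^ (s - 1)
      * b ^ (1 - s)) 0 (inv_pos.mpr hb)]
  have h0 : b⁻¹ * 0 = (0:ℝ) := by ring
  rw [h0, inv_inv, smul_eq_mul]
  -- now compute ∫ y in Ioi 0, log (b*y) * ((b*y)^(s-1) * exp (-y)) * b^(s-1) * b^(1-s)
  have expand : ∫ y in Ioi (0:ℝ),
      Real.log (b * y) * ((b * y) ^ (s - 1) * Real.exp (-y)) * b ^ (s - 1) * b ^ (1 - s)
      = ∫ y in Ioi (0:ℝ), b ^ (s - 1) * b ^ (s - 1) * b ^ (1 - s) *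
          (Real.log b * (y ^ (s - 1) * Real.exp (-y))
            + y ^ (s - 1) * (Real.log y * Real.exp (-y))) := by
    refine setIntegral_congr_fun measurableSet_Ioi (fun y hy => ?_)
    have hy0 : (0:ℝ) < y := hy
    beta_reduce
    rw [Real.log_mul hb.ne' hy0.ne', Real.mul_rpow hb.le hy0.le]
    ring
  rw [expand, MeasureTheory.integral_const_mul]
  have hint1 : IntegrableOn (fun y : ℝ => Real.log b * (y ^ (s - 1) * Real.exp (-y))) (Ioi 0) := by
    have := integrableOn_aux hs one_pos
    exact (this.congr_fun (fun x _ => by rw [div_one]) measurableSet_Ioi).const_mul _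
  have hint2 := integrableOn_G' hs
  rw [MeasureTheory.integral_add hint1 hint2, MeasureTheory.integral_const_mul]
  have hI1 : ∫ y in Ioi (0:ℝ), y ^ (s - 1) * Real.exp (-y) = Real.Gamma s := by
    have h := integral_aux hs one_pos
    simp only [div_one, Real.one_rpow, mul_one] at h
    exact h
  rw [hI1, ← Gamma_mul_digamma hs]
  have hbb : b ^ (s - 1) * b ^ (s - 1) * b ^ (1 - s) = b ^ (s - 1) := by
    rw [← Real.rpow_add hb, ← Real.rpow_add hb]
    congr 1
    ring
  have hbs : b * b ^ (s - 1) = b ^ s := by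
    rw [mul_comm, ← Real.rpow_add_one hb.ne' (s - 1)]
    congr 1
    ring
  rw [hbb]
  have : b * (b ^ (s - 1) * (Real.log b * Real.Gamma s + Real.Gamma s * digamma s))
      = (b * b ^ (s - 1)) * (Real.log b * Real.Gamma s + Real.Gamma s * digamma s) := by ring
  rw [this, hbs]
  ring

end KLGammaAux

open KLGammaAux
open scoped ENNReal NNReal

theorem klDiv_gamma_gamma (α₁ β₁ α₂ β₂ : ℝ) (hα₁ : 0 < α₁) (hβ₁ : 0 < β₁)
    (hα₂ : 0 < α₂) (hβ₂ : 0 < β₂) :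
    klDiv (gammaDist α₁ β₁) (gammaDist α₂ β₂) =
      α₁ * (β₁ - β₂) / β₂ + α₂ * Real.log (β₂ / β₁)
        + Real.log (Real.Gamma α₂ / Real.Gamma α₁) + (α₁ - α₂) * digamma α₁ := by
  classical
  set C₁ : ℝ := Real.Gamma α₁ * β₁ ^ α₁ with hC₁def
  set C₂ : ℝ := Real.Gamma α₂ * β₂ ^ α₂ with hC₂def
  have hC₁ : 0 < C₁ := mul_pos (Real.Gamma_pos_of_pos hα₁) (Real.rpow_pos_of_pos hβ₁ _)
  have hC₂ : 0 < C₂ := mul_pos (Real.Gamma_pos_of_pos hα₂) (Real.rpow_pos_of_pos hβ₂ _)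
  set r : ℝ → ℝ := fun x => gpdf α₁ β₁ x / gpdf α₂ β₂ x with hrdef
  have hr_nonneg : ∀ x, 0 ≤ r x := fun x =>
    div_nonneg (gpdf_nonneg hα₁ hβ₁ x) (gpdf_nonneg hα₂ hβ₂ x)
  have hr_meas : Measurable fun x => ENNReal.ofReal (r x) :=
    ((measurable_gpdf α₁ β₁).div (measurable_gpdf α₂ β₂)).ennreal_ofReal
  -- P₁ = P₂.withDensity (ofReal ∘ r)
  have hP₁ : gammaDist α₁ β₁
      = (gammaDist α₂ β₂).withDensity (fun x => ENNReal.ofReal (r x)) := by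
    rw [gammaDist_eq α₂ β₂, ← withDensity_mul volume
      (measurable_gpdf α₂ β₂).ennreal_ofReal hr_meas, gammaDist_eq α₁ β₁]
    congr 1
    funext x
    rw [Pi.mul_apply, ← ENNReal.ofReal_mul (gpdf_nonneg hα₂ hβ₂ x)]
    congr 1
    by_cases hx : x ∈ Ioi (0:ℝ)
    · have h2 : 0 < gpdf α₂ β₂ x := gpdf_pos hα₂ hβ₂ hx
      rw [hrdef]
      field_simp
    · simp [hrdef, gpdf, hx]
  haveI hsf : SigmaFinite (gammaDist α₂ β₂) := by
    rw [gammaDist_eq]; infer_instance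
  have hrn : (gammaDist α₁ β₁).rnDeriv (gammaDist α₂ β₂)
      =ᵐ[gammaDist α₁ β₁] fun x => ENNReal.ofReal (r x) := by
    have h1 := Measure.rnDeriv_withDensity (gammaDist α₂ β₂) hr_meas
    rw [← hP₁] at h1
    have hac : gammaDist α₁ β₁ ≪ gammaDist α₂ β₂ := by
      rw [hP₁]; exact withDensity_absolutelyContinuous _ _
    exact hac.ae_le h1
  -- klDiv as an integral against P₁
  have hkl1 : klDiv (gammaDist α₁ β₁) (gammaDist α₂ β₂)
      = ∫ x, Real.log (r x) ∂(gammaDist α₁ β₁) := by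
    unfold klDiv
    refine integral_congr_ae ?_
    filter_upwards [hrn] with x hx
    rw [hx, ENNReal.toReal_ofReal (hr_nonneg x)]
  -- unfold density
  have hkl2 : ∫ x, Real.log (r x) ∂(gammaDist α₁ β₁)
      = ∫ x, gpdf α₁ β₁ x * Real.log (r x) := by
    rw [gammaDist_eq α₁ β₁]
    have hmeas : Measurable fun x => (gpdf α₁ β₁ x).toNNReal :=
      (measurable_gpdf α₁ β₁).real_toNNReal
    have : (volume.withDensity fun x => ENNReal.ofReal (gpdf α₁ β₁ x))
        = volume.withDensity fun x => ((gpdf α₁ β₁ x).toNNReal : ℝ≥0∞) := rfl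
    rw [this, integral_withDensity_eq_integral_smul hmeas]
    refine integral_congr_ae (Filter.Eventually.of_forall fun x => ?_)
    beta_reduce
    rw [NNReal.smul_def, smul_eq_mul, Real.coe_toNNReal _ (gpdf_nonneg hα₁ hβ₁ x)]
  have hkl3 : ∫ x, gpdf α₁ β₁ x * Real.log (r x)
      = ∫ x in Ioi (0:ℝ), gpdf α₁ β₁ x * Real.log (r x) := by
    symm
    refine setIntegral_eq_integral_of_forall_compl_eq_zero fun x hx => ?_
    simp [gpdf, hx]
  set D : ℝ := Real.log C₂ - Real.log C₁ with hDdef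
  have hlogr : ∀ x ∈ Ioi (0:ℝ), Real.log (r x)
      = (α₁ - α₂) * Real.log x + (β₂⁻¹ - β₁⁻¹) * x + D := by
    intro x hx
    have hx0 : (0:ℝ) < x := hx
    have hx1 : (0:ℝ) < x ^ (α₁ - 1) := Real.rpow_pos_of_pos hx0 _
    have hx2 : (0:ℝ) < x ^ (α₂ - 1) := Real.rpow_pos_of_pos hx0 _
    have he1 : (0:ℝ) < Real.exp (-x / β₁) := Real.exp_pos _
    have he2 : (0:ℝ) < Real.exp (-x / β₂) := Real.exp_pos _
    rw [hrdef]
    simp only [gpdf, if_pos hx]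
    rw [Real.log_div (by positivity) (by positivity),
      Real.log_div (by positivity) hC₁.ne', Real.log_div (by positivity) hC₂.ne',
      Real.log_mul hx1.ne' he1.ne', Real.log_mul hx2.ne' he2.ne',
      Real.log_exp, Real.log_exp, Real.log_rpow hx0, Real.log_rpow hx0, hDdef]
    field_simp
    ring
  -- rewrite the integrand on Ioi 0
  have hint_congr : ∫ x in Ioi (0:ℝ), gpdf α₁ β₁ x * Real.log (r x)
      = ∫ x in Ioi (0:ℝ), C₁⁻¹ *
          ((α₁ - α₂) * (Real.log x * (x ^ (α₁ - 1) * Real.exp (-(x / β₁))))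
            + (β₂⁻¹ - β₁⁻¹) * (x ^ (α₁ + 1 - 1) * Real.exp (-(x / β₁)))
            + D * (x ^ (α₁ - 1) * Real.exp (-(x / β₁)))) := by
    refine setIntegral_congr_fun measurableSet_Ioi (fun x hx => ?_)
    have hx0 : (0:ℝ) < x := hx
    rw [hlogr x hx]
    simp only [gpdf, if_pos hx]
    have hxx : x ^ (α₁ + 1 - 1) = x ^ (α₁ - 1) * x := by
      rw [← Real.rpow_add_one hx0.ne' (α₁ - 1)]
      ring_nf
    rw [hxx]
    have : -x / β₁ = -(x / β₁) := by ring
    rw [this]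
    field_simp
    ring
  -- integrability of the three pieces
  have hI1 : IntegrableOn
      (fun x : ℝ => (α₁ - α₂) * (Real.log x * (x ^ (α₁ - 1) * Real.exp (-(x / β₁))))) (Ioi 0) :=
    (integrableOn_log_aux hα₁ hβ₁).const_mul _
  have hI2 : IntegrableOn
      (fun x : ℝ => (β₂⁻¹ - β₁⁻¹) * (x ^ (α₁ + 1 - 1) * Real.exp (-(x / β₁)))) (Ioi 0) :=
    (integrableOn_aux (by linarith : (0:ℝ) < α₁ + 1) hβ₁).const_mul _
  have hI3 : IntegrableOn
      (fun x : ℝ => D * (x ^ (α₁ - 1) * Real.exp (-(x / β₁)))) (Ioi 0) :=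
    (integrableOn_aux hα₁ hβ₁).const_mul _
  -- compute the integral
  have hval : ∫ x in Ioi (0:ℝ),
      ((α₁ - α₂) * (Real.log x * (x ^ (α₁ - 1) * Real.exp (-(x / β₁))))
        + (β₂⁻¹ - β₁⁻¹) * (x ^ (α₁ + 1 - 1) * Real.exp (-(x / β₁)))
        + D * (x ^ (α₁ - 1) * Real.exp (-(x / β₁))))
      = (α₁ - α₂) * ((Real.log β₁ + digamma α₁) * C₁)
        + (β₂⁻¹ - β₁⁻¹) * (Real.Gamma (α₁ + 1) * β₁ ^ (α₁ + 1))
        + D * C₁ := by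
    have hI12 : IntegrableOn
        (fun x : ℝ => (α₁ - α₂) * (Real.log x * (x ^ (α₁ - 1) * Real.exp (-(x / β₁))))
          + (β₂⁻¹ - β₁⁻¹) * (x ^ (α₁ + 1 - 1) * Real.exp (-(x / β₁)))) (Ioi 0) := hI1.add hI2
    rw [MeasureTheory.integral_add hI12 hI3, MeasureTheory.integral_add hI1 hI2,
      MeasureTheory.integral_const_mul, MeasureTheory.integral_const_mul,
      MeasureTheory.integral_const_mul, integral_log_aux hα₁ hβ₁,
      integral_aux (by linarith : (0:ℝ) < α₁ + 1) hβ₁, integral_aux hα₁ hβ₁]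
  rw [hkl1, hkl2, hkl3, hint_congr, MeasureTheory.integral_const_mul, hval]
  -- final algebraic computation
  rw [Real.Gamma_add_one hα₁.ne']
  have hβs : β₁ ^ (α₁ + 1) = β₁ ^ α₁ * β₁ := by
    rw [Real.rpow_add_one hβ₁.ne']
  rw [hβs, hDdef, hC₁def, hC₂def,
    Real.log_mul (Real.Gamma_pos_of_pos hα₂).ne' (Real.rpow_pos_of_pos hβ₂ _).ne',
    Real.log_mul (Real.Gamma_pos_of_pos hα₁).ne' (Real.rpow_pos_of_pos hβ₁ _).ne',
    Real.log_rpow hβ₂, Real.log_rpow hβ₁,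
    Real.log_div (Real.Gamma_pos_of_pos hα₂).ne' (Real.Gamma_pos_of_pos hα₁).ne',
    Real.log_div hβ₂.ne' hβ₁.ne']
  have hC₁' : C₁ ≠ 0 := hC₁.ne'
  field_simp
  ring
end

section
/- Let P₁ be the gamma distribution with shape α₁ > 0 and scale β₁ > 0, and P₂ the gamma distribution with shape α₂ > 0 and scale β₂ > 0, and suppose the means are equal: α₁β₁ = α₂β₂. Then D(P₁‖P₂) ≤ (α₁ − α₂)² / (2·min(α₁, α₂)²). -/
open MeasureTheory Real Set

open Filter
open scoped ENNReal NNReal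

namespace KLGamma

noncomputable def psi (x : ℝ) : ℝ := deriv (fun y => Real.log (Real.Gamma y)) x

lemma diffAt_logGamma {x : ℝ} (hx : 0 < x) :
    DifferentiableAt ℝ (fun y => Real.log (Real.Gamma y)) x := by
  have h1 : DifferentiableAt ℝ Real.Gamma x :=
    Real.differentiableAt_Gamma fun m =>
      (lt_of_le_of_lt (neg_nonpos.mpr (Nat.cast_nonneg m)) hx).ne'
  exact h1.log (Real.Gamma_pos_of_pos hx).ne'

lemma hasDerivAt_logGamma {x : ℝ} (hx : 0 < x) :
    HasDerivAt (fun y => Real.log (Real.Gamma y)) (psi x) x :=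
  (diffAt_logGamma hx).hasDerivAt

lemma psi_add_one {x : ℝ} (hx : 0 < x) : psi (x + 1) = psi x + 1 / x := by
  unfold psi
  rw [← deriv_comp_add_const, one_div, ← Real.deriv_log, ← deriv_add (diffAt_logGamma hx)
    (Real.differentiableAt_log hx.ne')]
  apply Filter.EventuallyEq.deriv_eq
  filter_upwards [eventually_gt_nhds hx] with y hy
  rw [Real.Gamma_add_one hy.ne', Real.log_mul hy.ne' (Real.Gamma_pos_of_pos hy).ne', add_comm]
  rfl

lemma psi_le_log {x : ℝ} (hx : 0 < x) : psi x ≤ Real.log x := by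
  have hc : ConvexOn ℝ (Ioi 0) (Real.log ∘ Real.Gamma) := Real.convexOn_log_Gamma
  have h := hc.deriv_le_slope (mem_Ioi.mpr hx) (mem_Ioi.mpr (by linarith : (0:ℝ) < x + 1))
    (by linarith) (by simpa [Function.comp_def] using diffAt_logGamma hx)
  rw [slope_def_field, show x + 1 - x = (1:ℝ) by ring, div_one] at h
  calc psi x = deriv (Real.log ∘ Real.Gamma) x := by simp [psi, Function.comp_def]
  _ ≤ (Real.log ∘ Real.Gamma) (x+1) - (Real.log ∘ Real.Gamma) x := h
  _ = Real.log x := by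
      simp only [Function.comp_apply, Real.Gamma_add_one hx.ne',
        Real.log_mul hx.ne' (Real.Gamma_pos_of_pos hx).ne']
      ring

lemma log_sub_le_psi {x : ℝ} (hx : 0 < x) : Real.log x - 1 / x ≤ psi x := by
  have hc : ConvexOn ℝ (Ioi 0) (Real.log ∘ Real.Gamma) := Real.convexOn_log_Gamma
  have h := hc.slope_le_deriv (mem_Ioi.mpr hx) (mem_Ioi.mpr (by linarith : (0:ℝ) < x + 1))
    (by linarith) (by simpa [Function.comp_def] using diffAt_logGamma (by linarith : (0:ℝ) < x + 1))
  rw [slope_def_field, show x + 1 - x = (1:ℝ) by ring, div_one] at h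
  have h2 : Real.log x ≤ psi (x + 1) := by
    calc Real.log x = (Real.log ∘ Real.Gamma) (x+1) - (Real.log ∘ Real.Gamma) x := by
          simp only [Function.comp_apply, Real.Gamma_add_one hx.ne',
            Real.log_mul hx.ne' (Real.Gamma_pos_of_pos hx).ne']
          ring
    _ ≤ deriv (Real.log ∘ Real.Gamma) (x+1) := h
    _ = psi (x + 1) := by simp [psi, Function.comp_def]
  rw [psi_add_one hx] at h2
  linarith


lemma psi_eq {a : ℝ} : psi a = deriv (fun y => Real.log (Real.Gamma y)) a := rfl

lemma aux_mono {u v : ℝ} (hu : 1 < u) (huv : u ≤ v) :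
    1/u + (Real.log (u-1) - Real.log u) ≤ 1/v + (Real.log (v-1) - Real.log v) := by
  have key : MonotoneOn (fun w : ℝ => 1/w + (Real.log (w-1) - Real.log w)) (Ioi 1) := by
    have hderiv : ∀ w ∈ Ioi (1:ℝ), HasDerivAt (fun w : ℝ => 1/w + (Real.log (w-1) - Real.log w))
        (-(1/w^2) + ((w-1)⁻¹ - w⁻¹)) w := by
      intro w hw
      have hw1 : (0:ℝ) < w - 1 := by simpa using hw
      have hw0 : (0:ℝ) < w := lt_trans one_pos hw
      have h1 : HasDerivAt (fun w : ℝ => 1/w) (-(1/w^2)) w := by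
        simpa [one_div] using (hasDerivAt_inv hw0.ne')
      have h2 : HasDerivAt (fun w : ℝ => Real.log (w-1)) ((w-1)⁻¹) w := by
        simpa using ((hasDerivAt_id w).sub_const 1).log hw1.ne'
      exact h1.add (h2.sub (Real.hasDerivAt_log hw0.ne'))
    apply monotoneOn_of_deriv_nonneg (convex_Ioi 1)
    · exact ContinuousOn.mono (fun w hw => ((hderiv w hw).continuousAt.continuousWithinAt)) (by simp [interior_Ioi])
    · intro w hw
      rw [interior_Ioi] at hw
      exact ((hderiv w hw).differentiableAt).differentiableWithinAt
    · intro w hw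
      rw [interior_Ioi] at hw
      rw [(hderiv w hw).deriv]
      have hw1 : (0:ℝ) < w - 1 := by simpa using hw
      have hw0 : (0:ℝ) < w := by linarith
      have h3 : (w-1)⁻¹ - w⁻¹ = 1/(w*(w-1)) := by
        field_simp
        ring
      rw [h3, neg_add_eq_sub, sub_nonneg]
      apply div_le_div_of_nonneg_left one_pos.le (by positivity)
      nlinarith
  exact key (mem_Ioi.mpr hu) (mem_Ioi.mpr (lt_of_lt_of_le hu huv)) huv

lemma psi_add_nat {x : ℝ} (hx : 0 < x) (n : ℕ) :
    psi (x + n) = psi x + ∑ k ∈ Finset.range n, 1 / (x + k) := by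
  induction n with
  | zero => simp
  | succ n ih =>
      have : x + (n+1 : ℕ) = (x + n) + 1 := by push_cast; ring
      rw [this, psi_add_one (by positivity), ih, Finset.sum_range_succ]
      ring


lemma psi_diff_le {u v : ℝ} (hu : 0 < u) (huv : u ≤ v) :
    psi v - psi u ≤ Real.log v - Real.log u + (1/u - 1/v) := by
  have hv : 0 < v := lt_of_lt_of_le hu huv
  have key : ∀ n : ℕ, psi v - psi u ≤ Real.log v - Real.log u + (1/u - 1/v)
      + (v - u + 1) / (u + (n+1)) := by
    intro n
    have hun : (0:ℝ) < u + (n+1) := by positivity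
    have hvn : (0:ℝ) < v + (n+1) := by positivity
    have e1 : psi (u + ((n+1:ℕ):ℝ)) = psi u + ∑ k ∈ Finset.range (n+1), 1/(u+k) :=
      psi_add_nat hu (n+1)
    have e2 : psi (v + ((n+1:ℕ):ℝ)) = psi v + ∑ k ∈ Finset.range (n+1), 1/(v+k) :=
      psi_add_nat hv (n+1)
    have sumbound : (∑ k ∈ Finset.range (n+1), 1/(u+k)) - ∑ k ∈ Finset.range (n+1), 1/(v+k)
        ≤ (1/u - 1/v) + ((Real.log (u+n) - Real.log (v+n)) - (Real.log u - Real.log v)) := by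
      rw [← Finset.sum_sub_distrib, Finset.sum_range_succ']
      push_cast
      have main : ∑ i ∈ Finset.range n, (1/(u+((i:ℝ)+1)) - 1/(v+((i:ℝ)+1)))
          ≤ (Real.log (u+n) - Real.log (v+n)) - (Real.log u - Real.log v) := by
        have tele := Finset.sum_range_sub (fun i : ℕ => Real.log (u+i) - Real.log (v+i)) n
        push_cast at tele
        simp only [add_zero] at tele
        rw [← tele]
        apply Finset.sum_le_sum
        intro i _
        have hi : (0:ℝ) ≤ (i:ℝ) := Nat.cast_nonneg i
        have h := aux_mono (u := u + ((i:ℝ)+1)) (v := v + ((i:ℝ)+1))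
          (by linarith) (by linarith)
        rw [show u + ((i:ℝ)+1) - 1 = u + i from by ring,
          show v + ((i:ℝ)+1) - 1 = v + i from by ring] at h
        linarith
      have hrest : 1/(u+(0:ℝ)) - 1/(v+(0:ℝ)) = 1/u - 1/v := by norm_num
      calc ∑ i ∈ Finset.range n, (1/(u+((i:ℝ)+1)) - 1/(v+((i:ℝ)+1))) + (1/(u+(0:ℝ)) - 1/(v+(0:ℝ)))
          ≤ ((Real.log (u+n) - Real.log (v+n)) - (Real.log u - Real.log v)) + (1/u - 1/v) := by
            rw [hrest]; exact add_le_add main le_rfl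
        _ = (1/u - 1/v) + ((Real.log (u+n) - Real.log (v+n)) - (Real.log u - Real.log v)) := by ring
    have b1 : psi (v + ((n+1:ℕ):ℝ)) ≤ Real.log (v + (n+1)) := by
      have := psi_le_log (x := v + ((n+1:ℕ):ℝ)) (by push_cast; linarith)
      push_cast at this ⊢; linarith
    have b2 : Real.log (u + (n+1)) - 1/(u + (n+1)) ≤ psi (u + ((n+1:ℕ):ℝ)) := by
      have := log_sub_le_psi (x := u + ((n+1:ℕ):ℝ)) (by push_cast; linarith)
      push_cast at this ⊢; linarith
    have err1 : Real.log (v + (n+1)) - Real.log (u + (n+1)) ≤ (v - u)/(u + (n+1)) := by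
      rw [← Real.log_div hvn.ne' hun.ne']
      have := Real.log_le_sub_one_of_pos (div_pos hvn hun)
      have e : (v+(n+1))/(u+(n+1)) - 1 = (v-u)/(u+(n+1)) := by
        field_simp
        ring
      linarith
    have err2 : Real.log (u + n) - Real.log (v + n) ≤ 0 := by
      have hn0 : (0:ℝ) < u + n := by positivity
      have := Real.log_le_log hn0 (by linarith : u + (n:ℝ) ≤ v + n)
      linarith
    have expand : (v - u + 1) / (u + (n+1)) = (v-u)/(u+(n+1)) + 1/(u+(n+1)) := by
      rw [add_div]
    rw [expand]
    linarith
  have hlim : Filter.Tendsto (fun n : ℕ => Real.log v - Real.log u + (1/u - 1/v)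
      + (v - u + 1) / (u + (n+1))) atTop
      (nhds (Real.log v - Real.log u + (1/u - 1/v))) := by
    have h0 : Filter.Tendsto (fun n : ℕ => (v - u + 1) / (u + (n+1))) atTop (nhds 0) := by
      apply Filter.Tendsto.div_atTop tendsto_const_nhds
      apply Filter.tendsto_atTop_add_const_left
      apply Filter.tendsto_atTop_add_const_right
      exact tendsto_natCast_atTop_atTop
    simpa using Filter.Tendsto.const_add _ h0
  exact ge_of_tendsto' hlim key


lemma hasDerivAt_F {t : ℝ} (ht : 0 < t) :
    HasDerivAt (fun s : ℝ => Real.log (Real.Gamma s) - s * Real.log s + s)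
      (psi t - Real.log t) t := by
  have h1 := hasDerivAt_logGamma ht
  have h2 : HasDerivAt (fun s : ℝ => s * Real.log s) (Real.log t + 1) t :=
    Real.hasDerivAt_mul_log ht.ne'
  have h3 := (h1.sub h2).add (hasDerivAt_id t)
  exact h3.congr_deriv (by ring)

lemma main_bound {a b m : ℝ} (hm : 0 < m) (ha : m ≤ a) (hb : m ≤ b) :
    (a - b) * psi a - Real.log (Real.Gamma a) + Real.log (Real.Gamma b)
      + b * Real.log a - b * Real.log b + b - a ≤ (a - b)^2 / (2 * m^2) := by
  have ha0 : 0 < a := lt_of_lt_of_le hm ha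
  have hb0 : 0 < b := lt_of_lt_of_le hm hb
  set F : ℝ → ℝ := fun s => Real.log (Real.Gamma s) - s * Real.log s + s with hF
  set G : ℝ → ℝ := fun t => F t - (t - a) * (psi a - Real.log a) - (t - a)^2 / (2 * m^2) with hG
  have hGderiv : ∀ t, 0 < t → HasDerivAt G
      ((psi t - Real.log t) - (psi a - Real.log a) - (t - a) / m^2) t := by
    intro t ht
    have h1 := hasDerivAt_F ht
    have h2 : HasDerivAt (fun t : ℝ => (t - a) * (psi a - Real.log a)) (psi a - Real.log a) t := by
      simpa using ((hasDerivAt_id t).sub_const a).mul_const (psi a - Real.log a)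
    have h3 : HasDerivAt (fun t : ℝ => (t - a)^2 / (2 * m^2)) ((t - a) / m^2) t := by
      have h4 := (((hasDerivAt_id t).sub_const a).pow 2).div_const (2 * m^2)
      exact h4.congr_deriv (by simp only [id]; field_simp; ring)
    exact (h1.sub h2).sub h3
  have key : G b ≤ G a := by
    rcases le_total a b with hab | hab
    · have hanti : AntitoneOn G (Icc a b) := by
        apply antitoneOn_of_deriv_nonpos (convex_Icc a b)
        · exact fun t ht => (hGderiv t (lt_of_lt_of_le ha0 ht.1)).continuousAt.continuousWithinAt
        · intro t ht
          rw [interior_Icc] at ht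
          exact (hGderiv t (lt_trans ha0 ht.1)).differentiableAt.differentiableWithinAt
        · intro t ht
          rw [interior_Icc] at ht
          have ht0 : 0 < t := lt_trans ha0 ht.1
          rw [(hGderiv t ht0).deriv]
          have hd := psi_diff_le ha0 ht.1.le
          have e : 1/a - 1/t = (t-a)/(a*t) := by field_simp
          have htm : m ≤ t := le_trans ha ht.1.le
          have hmt : m^2 ≤ a*t := by rw [pow_two]; exact mul_le_mul ha htm hm.le ha0.le
          have h5 : (t-a)/(a*t) ≤ (t-a)/m^2 :=
            div_le_div_of_nonneg_left (by linarith [ht.1]) (by positivity) hmt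
          linarith
      exact hanti (left_mem_Icc.mpr hab) (right_mem_Icc.mpr hab) hab
    · have hmono : MonotoneOn G (Icc b a) := by
        apply monotoneOn_of_deriv_nonneg (convex_Icc b a)
        · exact fun t ht => (hGderiv t (lt_of_lt_of_le hb0 ht.1)).continuousAt.continuousWithinAt
        · intro t ht
          rw [interior_Icc] at ht
          exact (hGderiv t (lt_trans hb0 ht.1)).differentiableAt.differentiableWithinAt
        · intro t ht
          rw [interior_Icc] at ht
          have ht0 : 0 < t := lt_trans hb0 ht.1
          rw [(hGderiv t ht0).deriv]
          have hd := psi_diff_le ht0 ht.2.le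
          have e : 1/t - 1/a = (a-t)/(t*a) := by field_simp
          have htm : m ≤ t := le_trans hb ht.1.le
          have hmt : m^2 ≤ t*a := by rw [pow_two]; exact mul_le_mul htm ha hm.le ht0.le
          have h5 : (a-t)/(t*a) ≤ (a-t)/m^2 :=
            div_le_div_of_nonneg_left (by linarith [ht.2]) (by positivity) hmt
          have e2 : (t-a)/m^2 = -((a-t)/m^2) := by ring
          linarith
      exact hmono (left_mem_Icc.mpr hab) (right_mem_Icc.mpr hab) hab
  have hGa : G a = F a := by simp [hG]
  rw [hGa] at key
  simp only [hG, hF] at key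
  ring_nf at key ⊢
  linarith


lemma hasDerivAt_Gamma_integral {a : ℝ} (ha : 0 < a) :
    HasDerivAt Real.Gamma (∫ t in Ioi (0:ℝ), t ^ (a-1) * (Real.log t * Real.exp (-t))) a := by
  have hc : HasDerivAt Complex.GammaIntegral
      (∫ t : ℝ in Ioi 0, (t:ℂ) ^ ((a:ℂ) - 1) * (Real.log t * Real.exp (-t))) a :=
    Complex.hasDerivAt_GammaIntegral (by simpa using ha)
  have heq : Complex.GammaIntegral =ᶠ[nhds (a:ℂ)] Complex.Gamma := by
    have hopen : IsOpen {s : ℂ | 0 < s.re} := isOpen_lt continuous_const Complex.continuous_re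
    filter_upwards [hopen.mem_nhds (by simpa using ha)] with s hs
    exact (Complex.Gamma_eq_integral hs).symm
  have hc2 : HasDerivAt Complex.Gamma
      (∫ t : ℝ in Ioi 0, (t:ℂ) ^ ((a:ℂ) - 1) * (Real.log t * Real.exp (-t))) a :=
    hc.congr_of_eventuallyEq heq.symm
  have hre := hc2.real_of_complex
  have hfun : (fun x : ℝ => (Complex.Gamma (x:ℂ)).re) = Real.Gamma := by
    funext x
    rw [Complex.Gamma_ofReal, Complex.ofReal_re]
  have hint : (∫ t : ℝ in Ioi 0, (t:ℂ) ^ ((a:ℂ) - 1) * (Real.log t * Real.exp (-t)))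
      = ((∫ t in Ioi (0:ℝ), t ^ (a-1) * (Real.log t * Real.exp (-t)) : ℝ) : ℂ) := by
    have hoR : (∫ t in Ioi (0:ℝ), ((t ^ (a-1) * (Real.log t * Real.exp (-t)) : ℝ) : ℂ))
        = ((∫ t in Ioi (0:ℝ), t ^ (a-1) * (Real.log t * Real.exp (-t)) : ℝ) : ℂ) :=
      integral_ofReal
    rw [← hoR]
    refine setIntegral_congr_fun measurableSet_Ioi (fun t ht => ?_)
    rw [mem_Ioi] at ht
    push_cast
    rw [Complex.ofReal_cpow ht.le]
    push_cast
    ring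
  rw [hfun, hint] at hre
  simpa using hre


lemma integrableOn_core {a r : ℝ} (ha : 0 < a) (hr : 0 < r) :
    IntegrableOn (fun t : ℝ => t ^ (a-1) * Real.exp (-(r*t))) (Ioi 0) := by
  have h := integrableOn_rpow_mul_exp_neg_mul_rpow (p := 1) (s := a-1) (b := r)
    (by linarith) one_pos hr
  refine h.congr_fun (fun t ht => ?_) measurableSet_Ioi
  beta_reduce
  rw [Real.rpow_one, neg_mul]

lemma integral_core {a r : ℝ} (ha : 0 < a) (hr : 0 < r) :
    ∫ t in Ioi (0:ℝ), t ^ (a-1) * Real.exp (-(r*t)) = (1/r) ^ a * Real.Gamma a :=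
  Real.integral_rpow_mul_exp_neg_mul_Ioi ha hr

lemma integrableOn_mul_core {a r : ℝ} (ha : 0 < a) (hr : 0 < r) :
    IntegrableOn (fun t : ℝ => t * (t ^ (a-1) * Real.exp (-(r*t)))) (Ioi 0) := by
  refine (integrableOn_core (a := a+1) (by linarith) hr).congr_fun (fun t ht => ?_) measurableSet_Ioi
  rw [mem_Ioi] at ht
  beta_reduce
  rw [show a + 1 - 1 = a - 1 + 1 from by ring, Real.rpow_add_one ht.ne']
  ring

lemma integral_mul_core {a r : ℝ} (ha : 0 < a) (hr : 0 < r) :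
    ∫ t in Ioi (0:ℝ), t * (t ^ (a-1) * Real.exp (-(r*t))) = (1/r)^(a+1) * (a * Real.Gamma a) := by
  rw [show ∫ t in Ioi (0:ℝ), t * (t ^ (a-1) * Real.exp (-(r*t)))
      = ∫ t in Ioi (0:ℝ), t ^ (a+1-1) * Real.exp (-(r*t)) from
    setIntegral_congr_fun measurableSet_Ioi (fun t ht => by
      rw [show a + 1 - 1 = a - 1 + 1 from by ring, Real.rpow_add_one (mem_Ioi.mp ht).ne']
      ring)]
  rw [integral_core (by linarith) hr, Real.Gamma_add_one ha.ne']

lemma integrableOn_log_core {a r : ℝ} (ha : 0 < a) (hr : 0 < r) :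
    IntegrableOn (fun t : ℝ => Real.log t * (t ^ (a-1) * Real.exp (-(r*t)))) (Ioi 0) := by
  have h1 : IntegrableOn (fun t : ℝ => (2/a) * (t ^ (a/2-1) * Real.exp (-(r*t)))) (Ioi 0) :=
    (integrableOn_core (a := a/2) (by linarith) hr).const_mul _
  have h2 : IntegrableOn (fun t : ℝ => t * (t ^ (a-1) * Real.exp (-(r*t)))) (Ioi 0) :=
    integrableOn_mul_core ha hr
  apply Integrable.mono' (h1.add h2)
  · apply Measurable.aestronglyMeasurable
    exact Real.measurable_log.mul (((measurable_id.pow_const _).mul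
      ((measurable_const.mul measurable_id).neg.exp)))
  · filter_upwards [ae_restrict_mem measurableSet_Ioi] with t ht
    rw [mem_Ioi] at ht
    have hexp : (0:ℝ) < Real.exp (-(r*t)) := Real.exp_pos _
    have hrp : (0:ℝ) < t ^ (a-1) := Real.rpow_pos_of_pos ht _
    rw [Real.norm_eq_abs, abs_mul, abs_of_pos (mul_pos hrp hexp), ← mul_assoc]
    simp only [Pi.add_apply]
    have key : |Real.log t| * t ^ (a-1) ≤ (2/a) * t ^ (a/2-1) + t * t ^ (a-1) := by
      rcases le_or_gt 1 t with h1t | h1t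
      · have hlog : |Real.log t| ≤ t := by
          rw [abs_of_nonneg (Real.log_nonneg h1t)]
          linarith [Real.log_le_sub_one_of_pos (by linarith : (0:ℝ) < t)]
        have : |Real.log t| * t ^ (a-1) ≤ t * t ^ (a-1) :=
          mul_le_mul_of_nonneg_right hlog hrp.le
        have hpos : (0:ℝ) ≤ (2/a) * t ^ (a/2-1) := by positivity
        linarith
      · have hlog : |Real.log t| ≤ (2/a) * t ^ (-(a/2)) := by
          rw [abs_of_nonpos (Real.log_nonpos ht.le h1t.le)]
          have h3 : Real.log (t ^ (-(a/2))) ≤ t ^ (-(a/2)) - 1 :=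
            Real.log_le_sub_one_of_pos (Real.rpow_pos_of_pos ht _)
          rw [Real.log_rpow ht] at h3
          have ha2 : (0:ℝ) < 2/a := by positivity
          calc -Real.log t = (2/a) * (-(a/2) * Real.log t) := by field_simp
          _ ≤ (2/a) * (t ^ (-(a/2)) - 1) := by
              apply mul_le_mul_of_nonneg_left h3 ha2.le
          _ ≤ (2/a) * t ^ (-(a/2)) := by
              have := Real.rpow_pos_of_pos ht (-(a/2))
              nlinarith
        have : |Real.log t| * t ^ (a-1) ≤ ((2/a) * t ^ (-(a/2))) * t ^ (a-1) :=
          mul_le_mul_of_nonneg_right hlog hrp.le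
        have hcomb : ((2/a) * t ^ (-(a/2))) * t ^ (a-1) = (2/a) * t ^ (a/2-1) := by
          rw [mul_assoc, ← Real.rpow_add ht]
          ring_nf
        have hpos : (0:ℝ) ≤ t * t ^ (a-1) := by positivity
        linarith [hcomb ▸ this]
    calc |Real.log t| * t ^ (a-1) * Real.exp (-(r*t))
        ≤ ((2/a) * t ^ (a/2-1) + t * t ^ (a-1)) * Real.exp (-(r*t)) :=
          mul_le_mul_of_nonneg_right key hexp.le
      _ = (2/a) * (t ^ (a/2-1) * Real.exp (-(r*t))) + t * (t ^ (a-1) * Real.exp (-(r*t))) := by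
          ring


lemma integral_log_core {a β : ℝ} (ha : 0 < a) (hβ : 0 < β) :
    ∫ t in Ioi (0:ℝ), Real.log t * (t ^ (a-1) * Real.exp (-(β⁻¹ * t)))
      = β ^ a * (Real.log β * Real.Gamma a + deriv Real.Gamma a) := by
  have hβi : (0:ℝ) < β⁻¹ := inv_pos.mpr hβ
  set g : ℝ → ℝ := fun y => Real.log (β*y) * ((β*y) ^ (a-1) * Real.exp (-y)) with hg
  have hsub := integral_comp_mul_left_Ioi g 0 hβi
  have hfun : (fun x => g (β⁻¹ * x)) = fun x => Real.log x * (x ^ (a-1) * Real.exp (-(β⁻¹ * x))) := by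
    funext x
    simp only [hg, mul_inv_cancel_left₀ hβ.ne']
  rw [hfun] at hsub
  simp only [mul_zero, inv_inv, smul_eq_mul] at hsub
  rw [hsub]
  have hA : IntegrableOn (fun y : ℝ => Real.log β * (y^(a-1) * Real.exp (-y))) (Ioi 0) := by
    have h' : IntegrableOn (fun y : ℝ => Real.log β * (y^(a-1) * Real.exp (-(1*y)))) (Ioi 0) :=
      (integrableOn_core ha one_pos).const_mul (Real.log β)
    refine h'.congr_fun (fun y hy => by beta_reduce; rw [one_mul]) measurableSet_Ioi
  have hB : IntegrableOn (fun y : ℝ => Real.log y * (y^(a-1) * Real.exp (-y))) (Ioi 0) := by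
    refine (integrableOn_log_core ha one_pos).congr_fun
      (fun y hy => by beta_reduce; rw [one_mul]) measurableSet_Ioi
  have hexpand : ∫ y in Ioi (0:ℝ), g y = β^(a-1) * ((Real.log β * Real.Gamma a) + deriv Real.Gamma a) := by
    have h1 : ∫ y in Ioi (0:ℝ), g y = ∫ y in Ioi (0:ℝ),
        β^(a-1) * (Real.log β * (y^(a-1) * Real.exp (-y)) + Real.log y * (y^(a-1) * Real.exp (-y))) := by
      refine setIntegral_congr_fun measurableSet_Ioi (fun y hy => ?_)
      rw [mem_Ioi] at hy
      simp only [hg]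
      rw [Real.log_mul hβ.ne' hy.ne', Real.mul_rpow hβ.le hy.le]
      ring
    rw [h1, integral_const_mul, integral_add hA hB]
    have e : ∫ y in Ioi (0:ℝ), y ^ (a-1) * Real.exp (-y)
        = ∫ y in Ioi (0:ℝ), Real.exp (-y) * y ^ (a-1) :=
      setIntegral_congr_fun measurableSet_Ioi fun y hy => by ring
    have eA : ∫ y in Ioi (0:ℝ), Real.log β * (y^(a-1) * Real.exp (-y))
        = Real.log β * Real.Gamma a := by
      rw [integral_const_mul, e, Real.Gamma_eq_integral ha]
    have eB : ∫ y in Ioi (0:ℝ), Real.log y * (y^(a-1) * Real.exp (-y))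
        = deriv Real.Gamma a := by
      rw [(hasDerivAt_Gamma_integral ha).deriv]
      exact setIntegral_congr_fun measurableSet_Ioi (fun y hy => by ring)
    rw [eA, eB]
  rw [hexpand, ← mul_assoc]
  congr 1
  rw [show β * β^(a-1) = β^(1:ℝ) * β^(a-1) from by rw [Real.rpow_one],
    ← Real.rpow_add hβ]
  norm_num


end KLGamma

namespace KLGamma

noncomputable def gpdf (a β : ℝ) : ℝ → ℝ := fun x =>
  if x ∈ Set.Ioi (0:ℝ) then x ^ (a - 1) * Real.exp (-x / β) / (Real.Gamma a * β ^ a) else 0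

lemma gammaDist_eq_withDensity (a β : ℝ) :
    gammaDist a β = volume.withDensity (fun x => ENNReal.ofReal (gpdf a β x)) := rfl

lemma measurable_gpdf (a β : ℝ) : Measurable (gpdf a β) := by
  unfold gpdf
  apply Measurable.ite measurableSet_Ioi _ measurable_const
  exact ((measurable_id.pow_const _).mul ((measurable_id.neg.div_const β).exp)).div_const _

lemma gpdf_nonneg {a β : ℝ} (ha : 0 < a) (hβ : 0 < β) (x : ℝ) : 0 ≤ gpdf a β x := by
  unfold gpdf
  split_ifs with h
  · have hx : 0 < x := h
    positivity
  · exact le_refl 0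

lemma gpdf_pos {a β x : ℝ} (ha : 0 < a) (hβ : 0 < β) (hx : 0 < x) : 0 < gpdf a β x := by
  unfold gpdf
  rw [if_pos (mem_Ioi.mpr hx)]
  positivity

lemma gammaDist_eq_gammaMeasure {a β : ℝ} (ha : 0 < a) (hβ : 0 < β) :
    gammaDist a β = ProbabilityTheory.gammaMeasure a β⁻¹ := by
  rw [gammaDist_eq_withDensity, ProbabilityTheory.gammaMeasure]
  apply withDensity_congr_ae
  have h0 : ∀ᵐ x : ℝ, x ≠ (0:ℝ) := by
    have hset : {x : ℝ | ¬ x ≠ 0} = {0} := by ext y; simp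
    rw [ae_iff, hset]
    exact measure_singleton 0
  filter_upwards [h0] with x hx
  rcases lt_trichotomy x 0 with h|h|h
  · rw [ProbabilityTheory.gammaPDF_of_neg h]
    rw [gpdf, if_neg (by simp [mem_Ioi]; linarith)]
    simp
  · exact absurd h hx
  · rw [ProbabilityTheory.gammaPDF_of_nonneg h.le, gpdf, if_pos (mem_Ioi.mpr h)]
    congr 1
    rw [Real.inv_rpow hβ.le]
    have he : -x / β = -(β⁻¹ * x) := by field_simp
    rw [he]
    have hΓ : Real.Gamma a ≠ 0 := (Real.Gamma_pos_of_pos ha).ne'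
    have hβa : β ^ a ≠ 0 := (Real.rpow_pos_of_pos hβ a).ne'
    field_simp

lemma isProbabilityMeasure_gammaDist {a β : ℝ} (ha : 0 < a) (hβ : 0 < β) :
    IsProbabilityMeasure (gammaDist a β) := by
  rw [gammaDist_eq_gammaMeasure ha hβ]
  exact ProbabilityTheory.isProbabilityMeasure_gammaMeasure ha (inv_pos.mpr hβ)


end KLGamma

open KLGamma in
theorem klDiv_gamma_gamma_same_mean_le (α₁ β₁ α₂ β₂ : ℝ) (hα₁ : 0 < α₁) (hβ₁ : 0 < β₁)
    (hα₂ : 0 < α₂) (hβ₂ : 0 < β₂) (hmean : α₁ * β₁ = α₂ * β₂) :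
    klDiv (gammaDist α₁ β₁) (gammaDist α₂ β₂) ≤ (α₁ - α₂) ^ 2 / (2 * min α₁ α₂ ^ 2) := by
  have hΓ₁ : (0:ℝ) < Real.Gamma α₁ := Real.Gamma_pos_of_pos hα₁
  have hΓ₂ : (0:ℝ) < Real.Gamma α₂ := Real.Gamma_pos_of_pos hα₂
  have hb₁ : (0:ℝ) < β₁ ^ α₁ := Real.rpow_pos_of_pos hβ₁ _
  have hb₂ : (0:ℝ) < β₂ ^ α₂ := Real.rpow_pos_of_pos hβ₂ _
  set C₁ : ℝ := Real.Gamma α₁ * β₁ ^ α₁ with hC₁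
  set C₂ : ℝ := Real.Gamma α₂ * β₂ ^ α₂ with hC₂
  have hC₁0 : 0 < C₁ := by positivity
  have hC₂0 : 0 < C₂ := by positivity
  set P₁ := gammaDist α₁ β₁ with hP₁def
  set P₂ := gammaDist α₂ β₂ with hP₂def
  haveI : IsProbabilityMeasure P₁ := isProbabilityMeasure_gammaDist hα₁ hβ₁
  haveI : IsProbabilityMeasure P₂ := isProbabilityMeasure_gammaDist hα₂ hβ₂
  set f₁ : ℝ → ℝ≥0∞ := fun x => ENNReal.ofReal (gpdf α₁ β₁ x) with hf₁
  set f₂ : ℝ → ℝ≥0∞ := fun x => ENNReal.ofReal (gpdf α₂ β₂ x) with hf₂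
  set h : ℝ → ℝ≥0∞ := fun x => f₁ x / f₂ x with hh
  have hmeas₁ : Measurable f₁ := (measurable_gpdf _ _).ennreal_ofReal
  have hmeas₂ : Measurable f₂ := (measurable_gpdf _ _).ennreal_ofReal
  have hmeash : Measurable h := hmeas₁.div hmeas₂
  -- P₁ = P₂.withDensity h
  have hP₁ : P₂.withDensity h = P₁ := by
    rw [hP₂def, hP₁def, gammaDist_eq_withDensity, gammaDist_eq_withDensity,
      ← withDensity_mul volume hmeas₂ hmeash]
    congr 1
    funext x
    by_cases hx : x ∈ Ioi (0:ℝ)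
    · have hpos : 0 < gpdf α₂ β₂ x := gpdf_pos hα₂ hβ₂ hx
      have hne : f₂ x ≠ 0 := by
        simp only [hf₂]
        exact (ENNReal.ofReal_pos.mpr hpos).ne'
      exact ENNReal.mul_div_cancel hne ENNReal.ofReal_ne_top
    · simp only [Pi.mul_apply, hh, hf₁, hf₂, gpdf, if_neg hx]
      simp
  have hac : P₁ ≪ P₂ := hP₁ ▸ withDensity_absolutelyContinuous P₂ h
  have hrn : P₁.rnDeriv P₂ =ᵐ[P₁] h := by
    have h2 := Measure.rnDeriv_withDensity P₂ hmeash
    rw [hP₁] at h2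
    exact hac.ae_eq h2
  have hsupp : ∀ᵐ x ∂P₁, x ∈ Ioi (0:ℝ) := by
    rw [ae_iff]
    have hset : {x : ℝ | ¬ x ∈ Ioi (0:ℝ)} = Iic 0 := by ext y; simp [mem_Ioi, mem_Iic]
    rw [hset, hP₁def, gammaDist_eq_withDensity, withDensity_apply _ measurableSet_Iic]
    rw [setLIntegral_congr_fun (g := fun _ => (0:ℝ≥0∞)) measurableSet_Iic
      (fun y (hy : y ∈ Iic 0) => by
        have hy2 : ¬ (0:ℝ) < y := not_lt.mpr hy
        simp [gpdf, hy2])]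
    simp
  set L : ℝ → ℝ := fun x => (α₁ - α₂) * Real.log x - (β₁⁻¹ - β₂⁻¹) * x
    + (Real.log C₂ - Real.log C₁) with hL
  -- klDiv = ∫ L dP₁
  have step1 : klDiv P₁ P₂ = ∫ x, L x ∂P₁ := by
    apply integral_congr_ae
    filter_upwards [hrn, hsupp] with x hx hx0
    rw [mem_Ioi] at hx0
    rw [hx]
    have hg₁ : 0 < gpdf α₁ β₁ x := gpdf_pos hα₁ hβ₁ hx0
    have hg₂ : 0 < gpdf α₂ β₂ x := gpdf_pos hα₂ hβ₂ hx0
    have htoReal : (h x).toReal = gpdf α₁ β₁ x / gpdf α₂ β₂ x := by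
      rw [hh]
      simp only [hf₁, hf₂]
      rw [ENNReal.toReal_div, ENNReal.toReal_ofReal (le_of_lt hg₁),
        ENNReal.toReal_ofReal (le_of_lt hg₂)]
    rw [htoReal, Real.log_div hg₁.ne' hg₂.ne']
    have hrp₁ : (0:ℝ) < x ^ (α₁ - 1) := Real.rpow_pos_of_pos hx0 _
    have hrp₂ : (0:ℝ) < x ^ (α₂ - 1) := Real.rpow_pos_of_pos hx0 _
    have hexp : ∀ y : ℝ, Real.exp y ≠ 0 := fun y => (Real.exp_pos y).ne'
    have hlog₁ : Real.log (gpdf α₁ β₁ x)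
        = (α₁ - 1) * Real.log x + (-x/β₁) - Real.log C₁ := by
      rw [gpdf, if_pos (mem_Ioi.mpr hx0), Real.log_div (by positivity) hC₁0.ne',
        Real.log_mul hrp₁.ne' (hexp _), Real.log_rpow hx0, Real.log_exp]
    have hlog₂ : Real.log (gpdf α₂ β₂ x)
        = (α₂ - 1) * Real.log x + (-x/β₂) - Real.log C₂ := by
      rw [gpdf, if_pos (mem_Ioi.mpr hx0), Real.log_div (by positivity) hC₂0.ne',
        Real.log_mul hrp₂.ne' (hexp _), Real.log_rpow hx0, Real.log_exp]
    rw [hlog₁, hlog₂, hL]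
    have e1 : -x/β₁ = -(β₁⁻¹ * x) := by field_simp
    have e2 : -x/β₂ = -(β₂⁻¹ * x) := by field_simp
    rw [e1, e2]
    ring
  -- move to Lebesgue integral
  have step2 : ∫ x, L x ∂P₁ = ∫ x in Ioi (0:ℝ), gpdf α₁ β₁ x * L x := by
    rw [hP₁def, gammaDist_eq_withDensity]
    have hnn : Measurable fun x => Real.toNNReal (gpdf α₁ β₁ x) :=
      measurable_real_toNNReal.comp (measurable_gpdf _ _)
    have hcoe : (fun x => ENNReal.ofReal (gpdf α₁ β₁ x))
        = fun x => ((Real.toNNReal (gpdf α₁ β₁ x) : ℝ≥0) : ℝ≥0∞) := rfl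
    rw [hcoe, integral_withDensity_eq_integral_smul hnn]
    have hsm : (fun x => Real.toNNReal (gpdf α₁ β₁ x) • L x) = fun x => gpdf α₁ β₁ x * L x := by
      funext x
      rw [NNReal.smul_def, Real.coe_toNNReal _ (gpdf_nonneg hα₁ hβ₁ x), smul_eq_mul]
    rw [hsm]
    symm
    apply setIntegral_eq_integral_of_forall_compl_eq_zero
    intro x hx
    have : gpdf α₁ β₁ x = 0 := by rw [gpdf, if_neg hx]
    rw [this, zero_mul]
  set core : ℝ → ℝ := fun x => x ^ (α₁ - 1) * Real.exp (-(β₁⁻¹ * x)) with hcore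
  have hβ₁i : (0:ℝ) < β₁⁻¹ := inv_pos.mpr hβ₁
  have hIlog : IntegrableOn (fun x => Real.log x * core x) (Ioi 0) :=
    integrableOn_log_core hα₁ hβ₁i
  have hIx : IntegrableOn (fun x => x * core x) (Ioi 0) := integrableOn_mul_core hα₁ hβ₁i
  have hI1 : IntegrableOn core (Ioi 0) := integrableOn_core hα₁ hβ₁i
  have step3 : ∫ x in Ioi (0:ℝ), gpdf α₁ β₁ x * L x
      = (1/C₁) * (((α₁ - α₂) * ∫ x in Ioi (0:ℝ), Real.log x * core x)
        - ((β₁⁻¹ - β₂⁻¹) * ∫ x in Ioi (0:ℝ), x * core x)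
        + ((Real.log C₂ - Real.log C₁) * ∫ x in Ioi (0:ℝ), core x)) := by
    have hcongr : ∫ x in Ioi (0:ℝ), gpdf α₁ β₁ x * L x
        = ∫ x in Ioi (0:ℝ), (1/C₁) * (((α₁ - α₂) * (Real.log x * core x))
          - ((β₁⁻¹ - β₂⁻¹) * (x * core x)) + ((Real.log C₂ - Real.log C₁) * core x)) := by
      refine setIntegral_congr_fun measurableSet_Ioi (fun x hx => ?_)
      rw [mem_Ioi] at hx
      rw [gpdf, if_pos (mem_Ioi.mpr hx), hL, hcore]
      have e1 : -x/β₁ = -(β₁⁻¹ * x) := by field_simp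
      rw [e1, ← hC₁]
      ring
    rw [hcongr, integral_const_mul]
    congr 1
    have hA : IntegrableOn (fun x => (α₁ - α₂) * (Real.log x * core x)) (Ioi 0) :=
      hIlog.const_mul _
    have hB : IntegrableOn (fun x => (β₁⁻¹ - β₂⁻¹) * (x * core x)) (Ioi 0) :=
      hIx.const_mul _
    have hCc : IntegrableOn (fun x => (Real.log C₂ - Real.log C₁) * core x) (Ioi 0) :=
      hI1.const_mul _
    have hAB : IntegrableOn (fun x => (α₁ - α₂) * (Real.log x * core x)
        - (β₁⁻¹ - β₂⁻¹) * (x * core x)) (Ioi 0) := hA.sub hB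
    rw [integral_add hAB hCc, integral_sub hA hB,
      integral_const_mul, integral_const_mul, integral_const_mul]
  have vlog : ∫ x in Ioi (0:ℝ), Real.log x * core x
      = β₁ ^ α₁ * (Real.log β₁ * Real.Gamma α₁ + deriv Real.Gamma α₁) := integral_log_core hα₁ hβ₁
  have vx : ∫ x in Ioi (0:ℝ), x * core x = β₁ ^ (α₁+1) * (α₁ * Real.Gamma α₁) := by
    rw [hcore, integral_mul_core hα₁ hβ₁i, one_div, inv_inv]
  have v1 : ∫ x in Ioi (0:ℝ), core x = β₁ ^ α₁ * Real.Gamma α₁ := by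
    rw [hcore, integral_core hα₁ hβ₁i, one_div, inv_inv]
  have hdΓ : deriv Real.Gamma α₁ = psi α₁ * Real.Gamma α₁ := by
    have hdiff : DifferentiableAt ℝ Real.Gamma α₁ :=
      Real.differentiableAt_Gamma fun m =>
        (lt_of_le_of_lt (neg_nonpos.mpr (Nat.cast_nonneg m)) hα₁).ne'
    rw [psi_eq, deriv.log hdiff hΓ₁.ne']
    field_simp
  have hE : klDiv P₁ P₂ = (α₁ - α₂) * (Real.log β₁ + psi α₁)
      - (β₁⁻¹ - β₂⁻¹) * (α₁ * β₁) + (Real.log C₂ - Real.log C₁) := by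
    rw [step1, step2, step3, vlog, vx, v1, hdΓ]
    have hrp : β₁ ^ (α₁ + 1) = β₁ ^ α₁ * β₁ := Real.rpow_add_one hβ₁.ne' α₁
    rw [hrp, hC₁]
    field_simp
  have hterm2 : (β₁⁻¹ - β₂⁻¹) * (α₁ * β₁) = α₁ - α₂ := by
    have h1 : α₁ * β₁ * β₁⁻¹ = α₁ := by field_simp
    have h2 : α₁ * β₁ * β₂⁻¹ = α₂ := by rw [hmean]; field_simp
    have expand : (β₁⁻¹ - β₂⁻¹) * (α₁ * β₁) = α₁ * β₁ * β₁⁻¹ - α₁ * β₁ * β₂⁻¹ := by ring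
    rw [expand, h1, h2]
  have hlogC : Real.log C₂ - Real.log C₁
      = (Real.log (Real.Gamma α₂) + α₂ * Real.log β₂)
        - (Real.log (Real.Gamma α₁) + α₁ * Real.log β₁) := by
    rw [hC₁, hC₂, Real.log_mul hΓ₂.ne' hb₂.ne', Real.log_mul hΓ₁.ne' hb₁.ne',
      Real.log_rpow hβ₂, Real.log_rpow hβ₁]
  have hlogβ₂ : Real.log β₂ = Real.log α₁ + Real.log β₁ - Real.log α₂ := by
    have hβ₂eq : β₂ = α₁ * β₁ / α₂ := by
      field_simp
      linarith [hmean]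
    rw [hβ₂eq, Real.log_div (by positivity) hα₂.ne', Real.log_mul hα₁.ne' hβ₁.ne']
  have hkl : klDiv P₁ P₂ = (α₁ - α₂) * psi α₁ - Real.log (Real.Gamma α₁)
      + Real.log (Real.Gamma α₂) + α₂ * Real.log α₁ - α₂ * Real.log α₂ + α₂ - α₁ := by
    rw [hE, hterm2, hlogC, hlogβ₂]
    ring
  rw [hkl]
  have hm : 0 < min α₁ α₂ := lt_min hα₁ hα₂
  have hfin := main_bound hm (min_le_left α₁ α₂) (min_le_right α₁ α₂)
  linarith [hfin]
end

section
/- For every x > 0, the trigamma function ψ′ = (log Γ)″ satisfies 1/x + 1/(2x²) < ψ′(x) < 1/x + 1/x². -/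
open Real

open Filter Topology

lemma summable_sq_inv {a : ℝ} (ha : 0 < a) :
    Summable (fun m : ℕ => ((a + m) ^ 2)⁻¹) := by
  rw [← summable_nat_add_iff 1]
  have h : Summable (fun m : ℕ => (((m : ℝ) + 1) ^ 2)⁻¹) := by
    have := (summable_nat_add_iff (f := fun m : ℕ => (((m : ℝ)) ^ 2)⁻¹) 1).mpr
      (Real.summable_nat_pow_inv.mpr one_lt_two)
    simpa using this
  refine Summable.of_nonneg_of_le (fun m => by positivity) (fun m => ?_) h
  have h1 : (0:ℝ) < (m:ℝ) + 1 := by positivity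
  refine inv_anti₀ (by positivity) ?_
  have : (m:ℝ) + 1 ≤ a + (m + 1 : ℕ) := by push_cast; linarith
  nlinarith [h1.le]

lemma hasSum_telescope {x : ℝ} (hx : 0 < x) :
    HasSum (fun m : ℕ => (x + m)⁻¹ - (x + (m+1:ℕ))⁻¹) x⁻¹ := by
  have key : ∀ n : ℕ, ∑ m ∈ Finset.range n, ((x + m)⁻¹ - (x + (m+1:ℕ))⁻¹)
      = x⁻¹ - (x + n)⁻¹ := by
    intro n
    have := Finset.sum_range_sub' (f := fun m : ℕ => (x + m)⁻¹) n
    simpa using this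
  have hnn : ∀ m : ℕ, 0 ≤ (x + m)⁻¹ - (x + (m+1:ℕ))⁻¹ := by
    intro m
    have h1 : (0:ℝ) < x + m := by positivity
    have h2 : x + (m:ℝ) ≤ x + ((m:ℕ)+1:ℕ) := by push_cast; linarith
    have := inv_anti₀ h1 h2
    linarith
  rw [hasSum_iff_tendsto_nat_of_nonneg hnn]
  simp_rw [key]
  have : Tendsto (fun n : ℕ => (x + n)⁻¹) atTop (𝓝 0) := by
    apply Tendsto.inv_tendsto_atTop
    exact tendsto_atTop_add_const_left _ _ tendsto_natCast_atTop_atTop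
  simpa using tendsto_const_nhds.sub this

noncomputable def psiLim (y : ℝ) : ℝ :=
  -y⁻¹ + -Real.eulerMascheroniConstant + ∑' m : ℕ, (((m:ℝ)+1)⁻¹ - (y + m + 1)⁻¹)

lemma g_eq {z : ℝ} (hz : 0 < z) (m : ℕ) :
    ((m:ℝ)+1)⁻¹ - (z + m + 1)⁻¹ = z / (((m:ℝ)+1) * (z + m + 1)) := by
  have h1 : ((m:ℝ)+1) ≠ 0 := by positivity
  have h2 : (z + m + 1) ≠ 0 := by positivity
  field_simp
  ring

lemma g_nonneg {z : ℝ} (hz : 0 < z) (m : ℕ) :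
    0 ≤ ((m:ℝ)+1)⁻¹ - (z + m + 1)⁻¹ := by
  rw [g_eq hz]
  positivity

lemma g_le {z b : ℝ} (hz : 0 < z) (hzb : z ≤ b) (m : ℕ) :
    ((m:ℝ)+1)⁻¹ - (z + m + 1)⁻¹ ≤ b * ((1 + (m:ℝ))^2)⁻¹ := by
  rw [g_eq hz]
  rw [div_le_iff₀ (by positivity)]
  have hm : (0:ℝ) ≤ m := Nat.cast_nonneg m
  have : ((1 + (m:ℝ))^2)⁻¹ * (((m:ℝ)+1) * (z + m + 1)) ≥ 1 := by
    rw [ge_iff_le, le_inv_mul_iff₀ (by positivity)]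
    nlinarith
  nlinarith

lemma summable_g {z : ℝ} (hz : 0 < z) :
    Summable (fun m : ℕ => ((m:ℝ)+1)⁻¹ - (z + m + 1)⁻¹) := by
  refine Summable.of_nonneg_of_le (g_nonneg hz) (g_le hz le_rfl) ?_
  exact (summable_sq_inv one_pos).mul_left z

lemma self_tendstoUniformlyOn {f : ℝ → ℝ} {s : Set ℝ} :
    TendstoUniformlyOn (fun _ : ℕ => f) f atTop s :=
  fun u hu => Filter.Eventually.of_forall (fun _ _ _ => refl_mem_uniformity hu)

lemma psi_unif {a b : ℝ} (ha : 0 < a) :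
    TendstoUniformlyOn
      (fun (n : ℕ) (z : ℝ) => Real.log n - ∑ m ∈ Finset.range (n+1), (z + m)⁻¹)
      psiLim atTop (Set.Ioo a b) := by
  have h1 : TendstoUniformlyOn (fun (_ : ℕ) (z : ℝ) => -z⁻¹) (fun z => -z⁻¹) atTop
      (Set.Ioo a b) := self_tendstoUniformlyOn
  have h2 : TendstoUniformlyOn (fun (n : ℕ) (_ : ℝ) => Real.log n - (harmonic n : ℝ))
      (fun _ => -Real.eulerMascheroniConstant) atTop (Set.Ioo a b) := by
    apply Filter.Tendsto.tendstoUniformlyOn_const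
    have := Real.tendsto_harmonic_sub_log.neg
    simpa [neg_sub] using this
  have h3 : TendstoUniformlyOn
      (fun (n : ℕ) (z : ℝ) => ∑ m ∈ Finset.range n, (((m:ℝ)+1)⁻¹ - (z + m + 1)⁻¹))
      (fun z => ∑' m : ℕ, (((m:ℝ)+1)⁻¹ - (z + m + 1)⁻¹)) atTop (Set.Ioo a b) := by
    apply tendstoUniformlyOn_tsum_nat (u := fun m => b * ((1 + (m:ℝ))^2)⁻¹)
      ((summable_sq_inv one_pos).mul_left b)
    intro m z hz
    rw [Real.norm_eq_abs, abs_of_nonneg (g_nonneg (ha.trans hz.1) m)]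
    exact g_le (ha.trans hz.1) hz.2.le m
  have h := (h1.add h2).add h3
  apply h.congr
  filter_upwards with n
  intro z hz
  have hz0 : (0:ℝ) < z := ha.trans hz.1
  show -z⁻¹ + (Real.log n - (harmonic n : ℝ))
      + ∑ m ∈ Finset.range n, (((m:ℝ)+1)⁻¹ - (z + m + 1)⁻¹)
      = Real.log n - ∑ m ∈ Finset.range (n+1), (z + m)⁻¹
  rw [Finset.sum_range_succ' (fun m => (z + (m:ℝ))⁻¹) n]
  rw [Finset.sum_sub_distrib]
  have hh : (harmonic n : ℝ) = ∑ m ∈ Finset.range n, (((m:ℝ)+1))⁻¹ := by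
    rw [harmonic]
    push_cast
    rfl
  rw [hh]
  push_cast
  simp only [add_assoc, add_zero]
  ring

lemma hasDerivAt_logGammaSeq (n : ℕ) {z : ℝ} (hz : 0 < z) :
    HasDerivAt (fun y => Real.BohrMollerup.logGammaSeq y n)
      (Real.log n - ∑ m ∈ Finset.range (n+1), (z + m)⁻¹) z := by
  simp only [Real.BohrMollerup.logGammaSeq]
  have h1 : HasDerivAt (fun y : ℝ => y * Real.log n + Real.log (Nat.factorial n : ℝ)) (Real.log n) z :=
    (hasDerivAt_mul_const _).add_const _
  have h2 : HasDerivAt (fun y : ℝ => ∑ m ∈ Finset.range (n+1), Real.log (y + m))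
      (∑ m ∈ Finset.range (n+1), (z + m)⁻¹) z := by
    apply HasDerivAt.fun_sum
    intro m _
    have hzm : z + (m:ℝ) ≠ 0 := by positivity
    have := (((hasDerivAt_id z).add_const (m:ℝ)).log hzm)
    simpa [one_div] using this
  exact h1.sub h2

lemma hasDerivAt_log_Gamma {y : ℝ} (hy : 0 < y) :
    HasDerivAt (fun z => Real.log (Real.Gamma z)) (psiLim y) y := by
  have ha : (0:ℝ) < y/2 := by linarith
  refine hasDerivAt_of_tendstoUniformlyOn (f := fun (n : ℕ) (z : ℝ) =>
      Real.BohrMollerup.logGammaSeq z n)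
    (f' := fun (n : ℕ) (z : ℝ) => Real.log n - ∑ m ∈ Finset.range (n+1), (z + m)⁻¹)
    isOpen_Ioo (psi_unif ha (b := y + 1)) ?_ ?_ (⟨by linarith, by linarith⟩ : y ∈ Set.Ioo (y/2) (y+1))
  · filter_upwards with n z hz
    exact hasDerivAt_logGammaSeq n (ha.trans hz.1)
  · intro z hz
    exact Real.BohrMollerup.tendsto_log_gamma (ha.trans hz.1)

lemma chi_unif {a b : ℝ} (ha : 0 < a) :
    TendstoUniformlyOn (fun (n : ℕ) (z : ℝ) => ∑ m ∈ Finset.range (n+1), ((z + m)^2)⁻¹)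
      (fun z => ∑' m : ℕ, ((z + m)^2)⁻¹) atTop (Set.Ioo a b) := by
  have base := tendstoUniformlyOn_tsum_nat (f := fun (m : ℕ) (z : ℝ) => ((z + m)^2)⁻¹)
    (summable_sq_inv ha) (s := Set.Ioo a b) ?_
  · exact fun u hu => (tendsto_add_atTop_nat 1).eventually (base u hu)
  · intro m z hz
    rw [Real.norm_eq_abs, abs_of_nonneg (by positivity)]
    have h1 : (0:ℝ) < a + m := by positivity
    refine inv_anti₀ (by positivity) ?_
    nlinarith [hz.1.le, Nat.cast_nonneg (α := ℝ) m]

lemma hasDerivAt_psiLim {y : ℝ} (hy : 0 < y) :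
    HasDerivAt psiLim (∑' m : ℕ, ((y + m)^2)⁻¹) y := by
  have ha : (0:ℝ) < y/2 := by linarith
  refine hasDerivAt_of_tendstoUniformlyOn (f := fun (n : ℕ) (z : ℝ) =>
      -z⁻¹ + -Real.eulerMascheroniConstant
        + ∑ m ∈ Finset.range n, (((m:ℝ)+1)⁻¹ - (z + m + 1)⁻¹))
    (f' := fun (n : ℕ) (z : ℝ) => ∑ m ∈ Finset.range (n+1), ((z + m)^2)⁻¹)
    isOpen_Ioo (chi_unif ha (b := y + 1)) ?_ ?_ (⟨by linarith, by linarith⟩ : y ∈ Set.Ioo (y/2) (y+1))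
  · filter_upwards with n z hz
    have hz0 : (0:ℝ) < z := ha.trans hz.1
    have h1 : HasDerivAt (fun w : ℝ => -w⁻¹ + -Real.eulerMascheroniConstant) ((z^2)⁻¹) z := by
      have := (hasDerivAt_inv hz0.ne').neg
      simpa using this.add_const (-Real.eulerMascheroniConstant)
    have h2 : HasDerivAt (fun w : ℝ => ∑ m ∈ Finset.range n, (((m:ℝ)+1)⁻¹ - (w + m + 1)⁻¹))
        (∑ m ∈ Finset.range n, ((z + m + 1)^2)⁻¹) z := by
      apply HasDerivAt.fun_sum
      intro m _
      have hzm : z + (m:ℝ) + 1 ≠ 0 := by positivity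
      have hb : HasDerivAt (fun w : ℝ => w + (m:ℝ) + 1) 1 z :=
        ((hasDerivAt_id z).add_const (m:ℝ)).add_const 1
      have := (hb.inv hzm).const_sub (((m:ℝ)+1)⁻¹)
      simpa [div_eq_mul_inv] using this
    have h := h1.add h2
    have heq : (z^2)⁻¹ + ∑ m ∈ Finset.range n, ((z + m + 1)^2)⁻¹
        = ∑ m ∈ Finset.range (n+1), ((z + m)^2)⁻¹ := by
      rw [Finset.sum_range_succ' (fun m => ((z + (m:ℝ))^2)⁻¹) n]
      push_cast
      simp only [add_assoc, add_zero]
      ring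
    rw [heq] at h
    exact h
  · intro z hz
    have hz0 : (0:ℝ) < z := ha.trans hz.1
    have := ((summable_g hz0).hasSum.tendsto_sum_nat).const_add
      (-z⁻¹ + -Real.eulerMascheroniConstant)
    simp only [psiLim]
    simpa [add_assoc] using this

/-- The trigamma function `ψ′ = (log Γ)″`. -/
noncomputable def trigamma (x : ℝ) : ℝ :=
  deriv (deriv (fun y => Real.log (Real.Gamma y))) x

lemma trigamma_eq {x : ℝ} (hx : 0 < x) :
    trigamma x = ∑' m : ℕ, ((x + m)^2)⁻¹ := by
  have hev : deriv (fun z => Real.log (Real.Gamma z)) =ᶠ[𝓝 x] psiLim := by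
    filter_upwards [isOpen_Ioi.mem_nhds (Set.mem_Ioi.mpr hx)] with y hy
    exact (hasDerivAt_log_Gamma hy).deriv
  rw [trigamma, hev.deriv_eq]
  exact (hasDerivAt_psiLim hx).deriv

theorem trigamma_bounds (x : ℝ) (hx : 0 < x) :
    1 / x + 1 / (2 * x ^ 2) < trigamma x ∧ trigamma x < 1 / x + 1 / x ^ 2 := by
  have hf : Summable (fun m : ℕ => ((x + m)^2)⁻¹) := summable_sq_inv hx
  have hf' : Summable (fun m : ℕ => ((x + (m+1:ℕ))^2)⁻¹) := by
    exact_mod_cast (summable_nat_add_iff 1).mpr hf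
  have hT := trigamma_eq hx
  have hzero : ∑' m : ℕ, ((x + m)^2)⁻¹
      = ((x:ℝ)^2)⁻¹ + ∑' m : ℕ, ((x + (m+1:ℕ))^2)⁻¹ := by
    have := Summable.tsum_eq_zero_add hf
    simpa using this
  have htel := hasSum_telescope hx
  constructor
  · -- lower bound
    have hS : ∑' m : ℕ, (((x + m)^2)⁻¹ + ((x + (m+1:ℕ))^2)⁻¹)
        = ∑' m : ℕ, ((x + m)^2)⁻¹ + ∑' m : ℕ, ((x + (m+1:ℕ))^2)⁻¹ :=
      Summable.tsum_add hf hf'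
    have hlt : ∑' m : ℕ, (2 * ((x + m)⁻¹ - (x + (m+1:ℕ))⁻¹))
        < ∑' m : ℕ, (((x + m)^2)⁻¹ + ((x + (m+1:ℕ))^2)⁻¹) := by
      refine Summable.tsum_lt_tsum (i := 0) (fun m => ?_) ?_ (htel.mul_left 2).summable (hf.add hf')
      · have hp : (0:ℝ) < x + m := by positivity
        have key : (((x+m)^2)⁻¹ + ((x+m+1)^2)⁻¹) - 2 * ((x+m)⁻¹ - (x+m+1)⁻¹)
            = ((x+m)^2 * (x+m+1)^2)⁻¹ := by
          field_simp
          ring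
        have hpos : (0:ℝ) < ((x+m)^2 * (x+m+1)^2)⁻¹ := by positivity
        push_cast
        simp only [← add_assoc]
        linarith
      · have hp : (0:ℝ) < x := hx
        have key : (((x+(0:ℕ))^2)⁻¹ + ((x+(0+1:ℕ))^2)⁻¹) - 2 * ((x+(0:ℕ))⁻¹ - (x+(0+1:ℕ))⁻¹)
            = ((x)^2 * (x+1)^2)⁻¹ := by
          push_cast
          field_simp
          ring
        have hpos : (0:ℝ) < ((x)^2 * (x+1)^2)⁻¹ := by positivity
        linarith
    have htsum2 : ∑' m : ℕ, (2 * ((x + m)⁻¹ - (x + (m+1:ℕ))⁻¹)) = 2 * x⁻¹ :=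
      (htel.mul_left 2).tsum_eq
    rw [hT, hzero]
    rw [htsum2, hS, hzero] at hlt
    have h2 : (2 * x^2)⁻¹ = (x^2)⁻¹ / 2 := by rw [mul_inv]; ring
    rw [one_div, one_div, h2]
    linarith
  · -- upper bound
    have hlt : ∑' m : ℕ, ((x + (m+1:ℕ))^2)⁻¹
        < ∑' m : ℕ, ((x + m)⁻¹ - (x + (m+1:ℕ))⁻¹) := by
      refine Summable.tsum_lt_tsum (i := 0) (fun m => ?_) ?_ hf' htel.summable
      · have hp : (0:ℝ) < x + m := by positivity
        have key : ((x+m)⁻¹ - (x+m+1)⁻¹) - ((x+m+1)^2)⁻¹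
            = ((x+m) * (x+m+1)^2)⁻¹ := by
          field_simp
          ring
        have hpos : (0:ℝ) < ((x+m) * (x+m+1)^2)⁻¹ := by positivity
        push_cast
        simp only [← add_assoc]
        linarith
      · have key : ((x+(0:ℕ))⁻¹ - (x+(0+1:ℕ))⁻¹) - ((x+(0+1:ℕ))^2)⁻¹
            = (x * (x+1)^2)⁻¹ := by
          push_cast
          field_simp
          ring
        have hpos : (0:ℝ) < (x * (x+1)^2)⁻¹ := by positivity
        linarith
    rw [hT, hzero]
    rw [htel.tsum_eq] at hlt
    rw [one_div, one_div]
    linarith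
end

section
/- Let n > 2 be a real number and σ² > 0, and let V have the gamma distribution with shape n/2 and scale 2σ²/n (so that E[V] = σ²). Then E[V/σ²] − 1 − E[log(V/σ²)] ≤ log(n/(n − 2)). -/
open MeasureTheory Real
open scoped NNReal ENNReal

namespace GammaAux

open Set

/-- The density of the gamma distribution on `(0, ∞)`. -/
noncomputable def dens (a b x : ℝ) : ℝ :=
  x ^ (a - 1) * Real.exp (-x / b) / (Real.Gamma a * b ^ a)

lemma dens_meas (a b : ℝ) : Measurable (dens a b) := by
  unfold dens
  fun_prop

lemma dens_nonneg {a b : ℝ} (ha : 0 < a) (hb : 0 < b) {x : ℝ} (hx : 0 < x) :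
    0 ≤ dens a b x := by
  unfold dens
  positivity

lemma gamma_int {s b : ℝ} (hs : 0 < s) (hb : 0 < b) :
    ∫ x in Ioi (0:ℝ), x ^ (s - 1) * Real.exp (-x / b) = Real.Gamma s * b ^ s := by
  have h := Real.integral_rpow_mul_exp_neg_mul_Ioi hs (show (0:ℝ) < 1 / b by positivity)
  simp_rw [show ∀ x : ℝ, -(1 / b * x) = -x / b from fun x => by ring] at h
  rw [h, one_div_one_div, mul_comm]

lemma gamma_integrable {s b : ℝ} (hs : 0 < s) (hb : 0 < b) :
    IntegrableOn (fun x => x ^ (s - 1) * Real.exp (-x / b)) (Ioi (0:ℝ)) := by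
  have h := integrableOn_rpow_mul_exp_neg_mul_rpow (s := s - 1) (p := 1) (b := 1 / b)
    (by linarith) zero_lt_one (by positivity)
  have heq : (fun x : ℝ => x ^ (s - 1) * Real.exp (-(1 / b) * x ^ (1:ℝ)))
      = fun x => x ^ (s - 1) * Real.exp (-x / b) := by
    funext x
    rw [Real.rpow_one, show -(1 / b) * x = -x / b from by ring]
  rwa [heq] at h

lemma gammaDist_eq (a b : ℝ) :
    gammaDist a b = volume.withDensity fun x =>
      ((Real.toNNReal (if x ∈ Ioi (0:ℝ) then dens a b x else 0) : ℝ≥0) : ℝ≥0∞) := rfl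

lemma ifdens_meas (a b : ℝ) :
    Measurable (fun x => if x ∈ Ioi (0:ℝ) then dens a b x else 0) :=
  Measurable.ite measurableSet_Ioi (dens_meas a b) measurable_const

lemma gammaDist_integral {a b : ℝ} (ha : 0 < a) (hb : 0 < b) (g : ℝ → ℝ)
    (hg : Measurable g) :
    ∫ v, g v ∂(gammaDist a b) = ∫ x in Ioi (0:ℝ), dens a b x * g x := by
  rw [gammaDist_eq, integral_withDensity_eq_integral_smul
    ((ifdens_meas a b).real_toNNReal) g, ← integral_indicator measurableSet_Ioi]
  congr 1
  funext x
  by_cases h : x ∈ Ioi (0:ℝ)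
  · rw [indicator_of_mem h, if_pos h, NNReal.smul_def,
      Real.coe_toNNReal _ (dens_nonneg ha hb h), smul_eq_mul]
  · rw [indicator_of_notMem h, if_neg h]
    simp

lemma gammaDist_integrable {a b : ℝ} (ha : 0 < a) (hb : 0 < b) (g : ℝ → ℝ)
    (hg : Measurable g)
    (h : IntegrableOn (fun x => dens a b x * g x) (Ioi (0:ℝ))) :
    Integrable g (gammaDist a b) := by
  rw [gammaDist_eq, integrable_withDensity_iff_integrable_coe_smul
    ((ifdens_meas a b).real_toNNReal)]
  rw [← integrable_indicator_iff measurableSet_Ioi] at h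
  apply h.congr
  filter_upwards with x
  by_cases hx : x ∈ Ioi (0:ℝ)
  · rw [indicator_of_mem hx, if_pos hx, Real.coe_toNNReal _ (dens_nonneg ha hb hx), smul_eq_mul]
  · rw [indicator_of_notMem hx, if_neg hx]
    simp

lemma J0 {a b : ℝ} (ha : 0 < a) (hb : 0 < b) :
    ∫ x in Ioi (0:ℝ), dens a b x = 1 := by
  unfold dens
  rw [integral_div, gamma_int ha hb, div_self (by positivity)]

lemma J1 {a b : ℝ} (ha : 0 < a) (hb : 0 < b) :
    ∫ x in Ioi (0:ℝ), dens a b x * x = a * b := by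
  have key : ∀ x ∈ Ioi (0:ℝ), dens a b x * x
      = x ^ ((a + 1) - 1) * Real.exp (-x / b) / (Real.Gamma a * b ^ a) := by
    intro x hx
    unfold dens
    rw [show (a + 1) - 1 = (a - 1) + 1 from by ring, Real.rpow_add_one (ne_of_gt hx)]
    ring
  rw [setIntegral_congr_fun measurableSet_Ioi key, integral_div,
    gamma_int (by linarith : (0:ℝ) < a + 1) hb, Real.Gamma_add_one (ne_of_gt ha),
    Real.rpow_add_one (ne_of_gt hb)]
  have h1 : Real.Gamma a ≠ 0 := ne_of_gt (Real.Gamma_pos_of_pos ha)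
  have h2 : b ^ a ≠ 0 := ne_of_gt (Real.rpow_pos_of_pos hb a)
  field_simp

lemma J2 {a b : ℝ} (ha : 1 < a) (hb : 0 < b) :
    ∫ x in Ioi (0:ℝ), dens a b x * x⁻¹ = ((a - 1) * b)⁻¹ := by
  have ha0 : 0 < a := by linarith
  have key : ∀ x ∈ Ioi (0:ℝ), dens a b x * x⁻¹
      = x ^ ((a - 1) - 1) * Real.exp (-x / b) / (Real.Gamma a * b ^ a) := by
    intro x hx
    unfold dens
    rw [show x ^ ((a - 1) - 1) = x ^ (a - 1) / x from Real.rpow_sub_one (ne_of_gt hx) (a - 1)]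
    field_simp
  rw [setIntegral_congr_fun measurableSet_Ioi key, integral_div,
    gamma_int (by linarith : (0:ℝ) < a - 1) hb]
  have hGa : Real.Gamma a = (a - 1) * Real.Gamma (a - 1) := by
    have := Real.Gamma_add_one (s := a - 1) (by intro h; apply absurd ha; simp [sub_eq_zero] at h; simp [h])
    rwa [sub_add_cancel] at this
  have hba : b ^ a = b ^ (a - 1) * b := by
    have := Real.rpow_add_one (ne_of_gt hb) (a - 1)
    rwa [sub_add_cancel] at this
  rw [hGa, hba]
  have h1 : Real.Gamma (a - 1) ≠ 0 := ne_of_gt (Real.Gamma_pos_of_pos (by linarith))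
  have h2 : b ^ (a - 1) ≠ 0 := ne_of_gt (Real.rpow_pos_of_pos hb _)
  have h3 : a - 1 ≠ 0 := by intro h; apply absurd ha; simp [sub_eq_zero] at h; simp [h]
  field_simp

lemma GI0 {a b : ℝ} (ha : 0 < a) (hb : 0 < b) :
    IntegrableOn (fun x => dens a b x) (Ioi (0:ℝ)) := by
  unfold dens
  simp_rw [div_eq_mul_inv]
  exact (gamma_integrable ha hb).mul_const _

lemma GI1 {a b : ℝ} (ha : 0 < a) (hb : 0 < b) :
    IntegrableOn (fun x => dens a b x * x) (Ioi (0:ℝ)) := by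
  have h := ((gamma_integrable (by linarith : (0:ℝ) < a + 1) hb).mul_const
    (Real.Gamma a * b ^ a)⁻¹)
  apply MeasureTheory.IntegrableOn.congr_fun h _ measurableSet_Ioi
  intro x hx
  dsimp only
  unfold dens
  rw [show (a + 1) - 1 = (a - 1) + 1 from by ring, Real.rpow_add_one (ne_of_gt hx)]
  ring

lemma GI2 {a b : ℝ} (ha : 1 < a) (hb : 0 < b) :
    IntegrableOn (fun x => dens a b x * x⁻¹) (Ioi (0:ℝ)) := by
  have h := ((gamma_integrable (by linarith : (0:ℝ) < a - 1) hb).mul_const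
    (Real.Gamma a * b ^ a)⁻¹)
  apply MeasureTheory.IntegrableOn.congr_fun h _ measurableSet_Ioi
  intro x hx
  dsimp only
  unfold dens
  rw [show x ^ ((a - 1) - 1) = x ^ (a - 1) / x from Real.rpow_sub_one (ne_of_gt hx) (a - 1)]
  field_simp

lemma abs_log_le {y : ℝ} (hy : 0 < y) : |Real.log y| ≤ y + y⁻¹ := by
  rcases le_or_gt 1 y with h | h
  · rw [abs_of_nonneg (Real.log_nonneg h)]
    have := Real.log_le_sub_one_of_pos hy
    have : Real.log y ≤ y - 1 := this
    have hinv : 0 < y⁻¹ := by positivity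
    linarith
  · rw [abs_of_nonpos (Real.log_nonpos (le_of_lt hy) (le_of_lt h))]
    have h1 : Real.log y⁻¹ ≤ y⁻¹ - 1 := Real.log_le_sub_one_of_pos (by positivity)
    rw [Real.log_inv] at h1
    linarith

end GammaAux

open GammaAux Set

theorem expectation_minus_log_expectation_le (n σ2 : ℝ) (hn : 2 < n) (hσ2 : 0 < σ2) :
    (∫ v, v / σ2 ∂(gammaDist (n / 2) (2 * σ2 / n))) - 1
        - ∫ v, Real.log (v / σ2) ∂(gammaDist (n / 2) (2 * σ2 / n)) ≤
      Real.log (n / (n - 2)) := by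
  set a : ℝ := n / 2 with ha_def
  set b : ℝ := 2 * σ2 / n with hb_def
  set c : ℝ := n / (n - 2) with hc_def
  have hn0 : 0 < n := by linarith
  have hn2 : 0 < n - 2 := by linarith
  have ha1 : 1 < a := by rw [ha_def]; linarith [(by linarith : 2 < n)]
  have ha : 0 < a := by linarith
  have hb : 0 < b := by rw [hb_def]; positivity
  have hc : 0 < c := by rw [hc_def]; positivity
  have hσ2' : σ2 ≠ 0 := ne_of_gt hσ2
  -- first integral equals 1
  have E1 : ∫ v, v / σ2 ∂(gammaDist a b) = 1 := by
    rw [gammaDist_integral ha hb (fun v => v / σ2) (by fun_prop)]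
    simp_rw [div_eq_mul_inv, ← mul_assoc]
    rw [integral_mul_const, J1 ha hb]
    rw [ha_def, hb_def]
    field_simp
  -- second integral
  have E2 : ∫ v, Real.log (v / σ2) ∂(gammaDist a b)
      = ∫ x in Ioi (0:ℝ), dens a b x * Real.log (x / σ2) := by
    exact gammaDist_integral ha hb (fun v => Real.log (v / σ2)) (Real.measurable_log.comp (measurable_id.div_const σ2))
  rw [E1, E2]
  -- integrability facts
  have hgi0 := GI0 ha hb
  have hgi1 := GI1 ha hb
  have hgi2 := GI2 ha1 hb
  -- integrability of the log integrand
  have hlogint : IntegrableOn (fun x => dens a b x * Real.log (x / σ2)) (Ioi (0:ℝ)) := by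
    apply Integrable.mono'
      ((hgi1.mul_const σ2⁻¹).add (hgi2.mul_const σ2))
    · exact ((dens_meas a b).mul
        (Real.measurable_log.comp (measurable_id.div_const σ2))).aestronglyMeasurable
    · rw [ae_restrict_iff' measurableSet_Ioi]
      filter_upwards with x hx
      have hx0 : (0:ℝ) < x := hx
      have hd := dens_nonneg ha hb hx0
      rw [Real.norm_eq_abs, abs_mul, abs_of_nonneg hd]
      have hlog : |Real.log (x / σ2)| ≤ x / σ2 + (x / σ2)⁻¹ :=
        abs_log_le (by positivity)
      calc dens a b x * |Real.log (x / σ2)| ≤ dens a b x * (x / σ2 + (x / σ2)⁻¹) :=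
            mul_le_mul_of_nonneg_left hlog hd
        _ = dens a b x * x * σ2⁻¹ + dens a b x * x⁻¹ * σ2 := by
            rw [inv_div]
            field_simp
  -- the dominating function
  have hFint : IntegrableOn
      (fun x => dens a b x * x⁻¹ * (σ2 / c) + dens a b x * (Real.log c - 1))
      (Ioi (0:ℝ)) := (hgi2.mul_const _).add (hgi0.mul_const _)
  -- pointwise bound
  have hpt : ∀ x ∈ Ioi (0:ℝ), -(dens a b x * Real.log (x / σ2))
      ≤ dens a b x * x⁻¹ * (σ2 / c) + dens a b x * (Real.log c - 1) := by
    intro x hx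
    have hx0 : (0:ℝ) < x := hx
    have hd := dens_nonneg ha hb hx0
    have key : -Real.log (x / σ2) ≤ x⁻¹ * (σ2 / c) + (Real.log c - 1) := by
      have h1 : Real.log ((σ2 / x) / c) ≤ (σ2 / x) / c - 1 :=
        Real.log_le_sub_one_of_pos (by positivity)
      rw [Real.log_div (by positivity) (ne_of_gt hc)] at h1
      have h2 : Real.log (σ2 / x) = -Real.log (x / σ2) := by
        rw [← Real.log_inv, inv_div]
      rw [h2] at h1
      have h3 : (σ2 / x) / c = x⁻¹ * (σ2 / c) := by field_simp
      linarith [h1, h3]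
    calc -(dens a b x * Real.log (x / σ2)) = dens a b x * (-Real.log (x / σ2)) := by ring
      _ ≤ dens a b x * (x⁻¹ * (σ2 / c) + (Real.log c - 1)) :=
          mul_le_mul_of_nonneg_left key hd
      _ = dens a b x * x⁻¹ * (σ2 / c) + dens a b x * (Real.log c - 1) := by ring
  -- conclude
  have step : -(∫ x in Ioi (0:ℝ), dens a b x * Real.log (x / σ2)) ≤ Real.log c := by
    rw [← integral_neg]
    calc ∫ x in Ioi (0:ℝ), -(dens a b x * Real.log (x / σ2))
        ≤ ∫ x in Ioi (0:ℝ), (dens a b x * x⁻¹ * (σ2 / c) + dens a b x * (Real.log c - 1)) :=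
          setIntegral_mono_on hlogint.neg hFint measurableSet_Ioi hpt
      _ = Real.log c := by
          rw [integral_add (hgi2.mul_const _) (hgi0.mul_const _),
            integral_mul_const, integral_mul_const, J2 ha1 hb, J0 ha hb]
          have : ((a - 1) * b)⁻¹ * (σ2 / c) = 1 := by
            rw [ha_def, hb_def, hc_def]
            field_simp
          rw [this]
          ring
  linarith
end

section
/- Let f : [0,1] → ℝ be continuous, and for i ∈ ℕ and 1 ≤ j ≤ 2^i let θ_{i,j} = ∫₀¹ f·ψ_{i,j} be its Haar wavelet coefficients. Fix k ∈ ℕ and t ∈ (0,1], and let I_k(t) = ((j−1)/2^k, j/2^k] be the dyadic interval of length 2^{−k} containing t. If Σ_{i≥k} 2^{i/2}·max_{1≤j≤2^i} |θ_{i,j}| < ∞, then |f(t) − 2^k ∫_{I_k(t)} f(x) dx| ≤ Σ_{i=k}^∞ 2^{i/2}·max_{1≤j≤2^i} |θ_{i,j}|. -/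
open MeasureTheory Real Set intervalIntegral Filter

/-- The Haar wavelet `ψ_{i,j}` on `[0,1]`, for `i ∈ ℕ` and `j = 1, …, 2^i`. -/
noncomputable def haar (i j : ℕ) (x : ℝ) : ℝ :=
  if ((j : ℝ) - 1) / 2 ^ i < x ∧ x ≤ ((j : ℝ) - 1 / 2) / 2 ^ i then (2 : ℝ) ^ ((i : ℝ) / 2)
  else if ((j : ℝ) - 1 / 2) / 2 ^ i < x ∧ x ≤ (j : ℝ) / 2 ^ i then -((2 : ℝ) ^ ((i : ℝ) / 2))
  else 0

/-- The Haar wavelet coefficient `θ_{i,j} = ∫₀¹ f ψ_{i,j}`. -/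
noncomputable def haarCoef (f : ℝ → ℝ) (i j : ℕ) : ℝ :=
  ∫ x in (0 : ℝ)..1, f x * haar i j x

/-- `max_{1 ≤ j ≤ 2^i} |θ_{i,j}|`. -/
noncomputable def maxAbsCoef (f : ℝ → ℝ) (i : ℕ) : ℝ :=
  (Finset.Icc 1 (2 ^ i)).sup' (Finset.nonempty_Icc.mpr Nat.one_le_two_pow)
    fun j => |haarCoef f i j|

lemma maxAbsCoef_nonneg (f : ℝ → ℝ) (i : ℕ) : 0 ≤ maxAbsCoef f i :=
  le_trans (abs_nonneg _)
    (Finset.le_sup' (fun j => |haarCoef f i j|) (Finset.mem_Icc.mpr ⟨le_refl 1, Nat.one_le_two_pow⟩))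

lemma abs_haarCoef_le (f : ℝ → ℝ) {i j : ℕ} (hj1 : 1 ≤ j) (hj2 : j ≤ 2 ^ i) :
    |haarCoef f i j| ≤ maxAbsCoef f i :=
  Finset.le_sup' (fun j => |haarCoef f i j|) (Finset.mem_Icc.mpr ⟨hj1, hj2⟩)

lemma intervalIntegrable_of_eqOn {g h : ℝ → ℝ} {u v : ℝ} (huv : u ≤ v)
    (hg : IntervalIntegrable g volume u v) (he : EqOn g h (Ioc u v)) :
    IntervalIntegrable h volume u v := by
  rw [intervalIntegrable_iff, uIoc_of_le huv] at *
  exact hg.congr_fun he measurableSet_Ioc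

lemma integral_of_eqOn {g h : ℝ → ℝ} {u v : ℝ} (huv : u ≤ v)
    (he : EqOn g h (Ioc u v)) :
    ∫ x in u..v, g x = ∫ x in u..v, h x := by
  rw [integral_of_le huv, integral_of_le huv]
  exact setIntegral_congr_fun measurableSet_Ioc he

/-- The key computation: the Haar coefficient equals `2^{i/2}` times the difference
of the integrals of `f` over the two halves of the dyadic interval. -/
lemma haarCoef_eq (f : ℝ → ℝ) (hf : ContinuousOn f (Icc 0 1)) (i j : ℕ)
    (hj1 : 1 ≤ j) (hj2 : j ≤ 2 ^ i) :
    haarCoef f i j = (2 : ℝ) ^ ((i : ℝ) / 2) *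
      ((∫ x in (((j : ℝ) - 1) / 2 ^ i)..(((j : ℝ) - 1 / 2) / 2 ^ i), f x)
        - ∫ x in (((j : ℝ) - 1 / 2) / 2 ^ i)..((j : ℝ) / 2 ^ i), f x) := by
  set a : ℝ := ((j : ℝ) - 1) / 2 ^ i with ha_def
  set m : ℝ := ((j : ℝ) - 1 / 2) / 2 ^ i with hm_def
  set b : ℝ := (j : ℝ) / 2 ^ i with hb_def
  have hp : (0 : ℝ) < 2 ^ i := by positivity
  have hj1' : (1 : ℝ) ≤ (j : ℝ) := by exact_mod_cast hj1
  have hj2' : (j : ℝ) ≤ 2 ^ i := by exact_mod_cast hj2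
  have h0a : (0 : ℝ) ≤ a := by
    apply div_nonneg _ hp.le; linarith
  have ham : a ≤ m := by
    rw [ha_def, hm_def]; gcongr; linarith
  have hmb : m ≤ b := by
    rw [hm_def, hb_def]; gcongr; linarith
  have hb1 : b ≤ 1 := by
    rw [hb_def, div_le_one hp]; exact hj2'
  have hm1 : m ≤ 1 := hmb.trans hb1
  have h0m : (0:ℝ) ≤ m := h0a.trans ham
  have h0b : (0:ℝ) ≤ b := h0m.trans hmb
  have hfint : ∀ u v : ℝ, 0 ≤ u → u ≤ v → v ≤ 1 → IntervalIntegrable f volume u v := by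
    intro u v h0 huv h1
    exact (hf.mono (by rw [uIcc_of_le huv]; exact Icc_subset_Icc h0 h1)).intervalIntegrable
  set g : ℝ → ℝ := fun x => f x * haar i j x with hg_def
  -- pointwise values of haar on the pieces
  have e0 : EqOn (fun _ => (0:ℝ)) g (Ioc 0 a) := by
    intro x hx
    have hxa : x ≤ a := hx.2
    simp only [hg_def, haar]
    rw [if_neg, if_neg]
    · ring
    · rintro ⟨h1, -⟩; exact absurd (hxa.trans ham) (not_le.mpr h1)
    · rintro ⟨h1, -⟩; exact absurd hxa (not_le.mpr h1)
  have e1 : EqOn (fun x => f x * (2:ℝ) ^ ((i:ℝ)/2)) g (Ioc a m) := by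
    intro x hx
    simp only [hg_def, haar]
    rw [if_pos ⟨hx.1, hx.2⟩]
  have e2 : EqOn (fun x => f x * -((2:ℝ) ^ ((i:ℝ)/2))) g (Ioc m b) := by
    intro x hx
    simp only [hg_def, haar]
    rw [if_neg, if_pos ⟨hx.1, hx.2⟩]
    rintro ⟨-, h2⟩; exact absurd h2 (not_le.mpr hx.1)
  have e3 : EqOn (fun _ => (0:ℝ)) g (Ioc b 1) := by
    intro x hx
    simp only [hg_def, haar]
    rw [if_neg, if_neg]
    · ring
    · rintro ⟨-, h2⟩; exact absurd h2 (not_le.mpr hx.1)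
    · rintro ⟨-, h2⟩; exact absurd h2 (not_le.mpr ((hmb.trans_lt hx.1)))
  have I0 : IntervalIntegrable g volume 0 a :=
    intervalIntegrable_of_eqOn h0a intervalIntegrable_const e0
  have I1 : IntervalIntegrable g volume a m :=
    intervalIntegrable_of_eqOn ham ((hfint a m h0a ham hm1).mul_const _) e1
  have I2 : IntervalIntegrable g volume m b :=
    intervalIntegrable_of_eqOn hmb ((hfint m b h0m hmb hb1).mul_const _) e2
  have I3 : IntervalIntegrable g volume b 1 :=
    intervalIntegrable_of_eqOn hb1 intervalIntegrable_const e3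
  have split : haarCoef f i j =
      (∫ x in (0:ℝ)..a, g x) + ((∫ x in a..m, g x) + ((∫ x in m..b, g x) + ∫ x in b..1, g x)) := by
    rw [integral_add_adjacent_intervals I2 I3, integral_add_adjacent_intervals I1 (I2.trans I3),
      integral_add_adjacent_intervals I0 (I1.trans (I2.trans I3))]
    rfl
  have v0 : (∫ x in (0:ℝ)..a, g x) = 0 := by
    rw [← integral_of_eqOn h0a e0]; simp
  have v3 : (∫ x in b..(1:ℝ), g x) = 0 := by
    rw [← integral_of_eqOn hb1 e3]; simp
  have v1 : (∫ x in a..m, g x) = (∫ x in a..m, f x) * (2:ℝ) ^ ((i:ℝ)/2) := by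
    rw [← integral_of_eqOn ham e1, intervalIntegral.integral_mul_const]
  have v2 : (∫ x in m..b, g x) = (∫ x in m..b, f x) * -((2:ℝ) ^ ((i:ℝ)/2)) := by
    rw [← integral_of_eqOn hmb e2, intervalIntegral.integral_mul_const]
  rw [split, v0, v1, v2, v3]
  ring

section Dyadic

variable (f : ℝ → ℝ) (t : ℝ)

/-- the index of the dyadic interval at level `n` containing `t`. -/
noncomputable def jidx (n : ℕ) : ℕ := ⌈t * 2 ^ n⌉₊

/-- the dyadic average at level `n` around `t`. -/
noncomputable def dyA (n : ℕ) : ℝ :=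
  2 ^ n * ∫ x in (((jidx t n : ℝ) - 1) / 2 ^ n)..((jidx t n : ℝ) / 2 ^ n), f x

variable {t}
variable (ht0 : 0 < t) (ht1 : t ≤ 1)
include ht0 ht1

lemma jidx_pos (n : ℕ) : 1 ≤ jidx t n := by
  have : (0:ℝ) < t * 2 ^ n := by positivity
  exact Nat.one_le_iff_ne_zero.mpr (by
    simp only [jidx, ne_eq, Nat.ceil_eq_zero, not_le]; exact this)

lemma jidx_le (n : ℕ) : jidx t n ≤ 2 ^ n := by
  rw [jidx, Nat.ceil_le]
  push_cast
  nlinarith [pow_pos (show (0:ℝ) < 2 by norm_num) n]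

lemma jidx_lb (n : ℕ) : ((jidx t n : ℝ) - 1) / 2 ^ n < t := by
  have hp : (0:ℝ) < 2 ^ n := by positivity
  rw [div_lt_iff₀ hp]
  have := Nat.ceil_lt_add_one (show (0:ℝ) ≤ t * 2 ^ n by positivity)
  rw [jidx]; push_cast; linarith

lemma jidx_ub (n : ℕ) : t ≤ (jidx t n : ℝ) / 2 ^ n := by
  have hp : (0:ℝ) < 2 ^ n := by positivity
  rw [le_div_iff₀ hp]
  exact Nat.le_ceil _

lemma jidx_succ_left (n : ℕ) (h : t ≤ ((jidx t n : ℝ) - 1 / 2) / 2 ^ n) :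
    jidx t (n + 1) = 2 * jidx t n - 1 := by
  have hp : (0 : ℝ) < 2 ^ n := by positivity
  have hj1 : 1 ≤ jidx t n := jidx_pos ht0 ht1 n
  have hlb := jidx_lb ht0 ht1 n
  rw [div_lt_iff₀ hp] at hlb
  rw [le_div_iff₀ hp] at h
  rw [jidx, Nat.ceil_eq_iff (by omega)]
  have c1 : ((2 * jidx t n - 1 - 1 : ℕ) : ℝ) = 2 * (jidx t n : ℝ) - 2 := by
    rw [show 2 * jidx t n - 1 - 1 = 2 * jidx t n - 2 from by omega,
      Nat.cast_sub (by omega)]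
    push_cast; ring
  have c2 : ((2 * jidx t n - 1 : ℕ) : ℝ) = 2 * (jidx t n : ℝ) - 1 := by
    rw [Nat.cast_sub (by omega)]; push_cast; ring
  rw [c1, c2, pow_succ]
  constructor <;> nlinarith

lemma jidx_succ_right (n : ℕ) (h : ¬ t ≤ ((jidx t n : ℝ) - 1 / 2) / 2 ^ n) :
    jidx t (n + 1) = 2 * jidx t n := by
  have hp : (0 : ℝ) < 2 ^ n := by positivity
  have hj1 : 1 ≤ jidx t n := jidx_pos ht0 ht1 n
  have hub := jidx_ub ht0 ht1 n
  rw [le_div_iff₀ hp] at hub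
  rw [not_le, div_lt_iff₀ hp] at h
  rw [jidx, Nat.ceil_eq_iff (by omega)]
  have c1 : ((2 * jidx t n - 1 : ℕ) : ℝ) = 2 * (jidx t n : ℝ) - 1 := by
    rw [Nat.cast_sub (by omega)]; push_cast; ring
  rw [c1, pow_succ]
  push_cast
  constructor <;> nlinarith

lemma dyA_step (hf : ContinuousOn f (Icc 0 1)) (n : ℕ) :
    |dyA f t (n + 1) - dyA f t n| ≤ (2 : ℝ) ^ ((n : ℝ) / 2) * maxAbsCoef f n := by
  have hp : (0 : ℝ) < 2 ^ n := by positivity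
  set j : ℕ := jidx t n with hj_def
  have hj1 : 1 ≤ j := jidx_pos ht0 ht1 n
  have hj2 : j ≤ 2 ^ n := jidx_le ht0 ht1 n
  have hj1' : (1 : ℝ) ≤ (j : ℝ) := by exact_mod_cast hj1
  have hj2' : (j : ℝ) ≤ 2 ^ n := by exact_mod_cast hj2
  set a : ℝ := ((j : ℝ) - 1) / 2 ^ n with ha_def
  set m : ℝ := ((j : ℝ) - 1 / 2) / 2 ^ n with hm_def
  set b : ℝ := (j : ℝ) / 2 ^ n with hb_def
  have h0a : (0 : ℝ) ≤ a := div_nonneg (by linarith) hp.le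
  have ham : a ≤ m := by rw [ha_def, hm_def]; gcongr; linarith
  have hmb : m ≤ b := by rw [hm_def, hb_def]; gcongr; linarith
  have hb1 : b ≤ 1 := by rw [hb_def, div_le_one hp]; exact hj2'
  have hm1 : m ≤ 1 := hmb.trans hb1
  have h0m : (0 : ℝ) ≤ m := h0a.trans ham
  have hfint : ∀ u v : ℝ, 0 ≤ u → u ≤ v → v ≤ 1 → IntervalIntegrable f volume u v := by
    intro u v h0 huv h1
    exact (hf.mono (by rw [uIcc_of_le huv]; exact Icc_subset_Icc h0 h1)).intervalIntegrable
  have hA0 : dyA f t n = 2 ^ n * ((∫ x in a..m, f x) + ∫ x in m..b, f x) := by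
    rw [dyA, integral_add_adjacent_intervals (hfint a m h0a ham hm1) (hfint m b h0m hmb hb1)]
  have hθ := haarCoef_eq f hf n j hj1 hj2
  rw [← ha_def, ← hm_def, ← hb_def] at hθ
  have hrp : (2 : ℝ) ^ ((n : ℝ) / 2) * (2 : ℝ) ^ ((n : ℝ) / 2) = 2 ^ n := by
    rw [← Real.rpow_natCast 2 n, ← Real.rpow_add two_pos]
    norm_num
  have hrpos : (0 : ℝ) < (2 : ℝ) ^ ((n : ℝ) / 2) := Real.rpow_pos_of_pos two_pos _
  have habs : |dyA f t (n + 1) - dyA f t n| = (2 : ℝ) ^ ((n : ℝ) / 2) * |haarCoef f n j| := by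
    by_cases hL : t ≤ m
    · have hsucc := jidx_succ_left ht0 ht1 n (by rw [← hj_def, ← hm_def] at *; exact hL)
      have cj : ((jidx t (n + 1) : ℝ)) = 2 * (j : ℝ) - 1 := by
        rw [hsucc, Nat.cast_sub (by omega)]; push_cast; ring
      have hA1 : dyA f t (n + 1) = 2 ^ (n + 1) * ∫ x in a..m, f x := by
        rw [dyA, cj, show (2 * (j : ℝ) - 1 - 1) / 2 ^ (n + 1) = a by
            rw [ha_def]; field_simp; ring,
          show (2 * (j : ℝ) - 1) / 2 ^ (n + 1) = m by rw [hm_def]; field_simp; ring]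
      have : dyA f t (n + 1) - dyA f t n = 2 ^ ((n : ℝ) / 2) * haarCoef f n j := by
        rw [hA1, hA0, hθ, ← mul_assoc, hrp, pow_succ]; ring
      rw [this, abs_mul, abs_of_pos hrpos]
    · have hsucc := jidx_succ_right ht0 ht1 n (by rw [← hj_def, ← hm_def] at *; exact hL)
      have cj : ((jidx t (n + 1) : ℝ)) = 2 * (j : ℝ) := by rw [hsucc]; push_cast; ring
      have hA1 : dyA f t (n + 1) = 2 ^ (n + 1) * ∫ x in m..b, f x := by
        rw [dyA, cj, show (2 * (j : ℝ) - 1) / 2 ^ (n + 1) = m by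
            rw [hm_def]; field_simp; ring,
          show (2 * (j : ℝ)) / 2 ^ (n + 1) = b by rw [hb_def]; field_simp; ring]
      have : dyA f t (n + 1) - dyA f t n = -(2 ^ ((n : ℝ) / 2) * haarCoef f n j) := by
        rw [hA1, hA0, hθ, ← mul_assoc, hrp, pow_succ]; ring
      rw [this, abs_neg, abs_mul, abs_of_pos hrpos]
  rw [habs]
  exact mul_le_mul_of_nonneg_left (abs_haarCoef_le f hj1 hj2) hrpos.le

lemma dyA_tendsto (hf : ContinuousOn f (Icc 0 1)) :
    Tendsto (dyA f t) atTop (nhds (f t)) := by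
  have htI : t ∈ Icc (0 : ℝ) 1 := ⟨ht0.le, ht1⟩
  rw [Metric.tendsto_atTop]
  intro ε hε
  have hu := isCompact_Icc.uniformContinuousOn_of_continuous hf
  rw [Metric.uniformContinuousOn_iff] at hu
  obtain ⟨δ, hδ, hδ'⟩ := hu (ε / 2) (by linarith)
  obtain ⟨N, hN⟩ := exists_pow_lt_of_lt_one hδ (show (1 : ℝ) / 2 < 1 by norm_num)
  refine ⟨N, fun n hn => ?_⟩
  have hp : (0 : ℝ) < 2 ^ n := by positivity
  set j : ℕ := jidx t n with hj_def
  have hj1 : 1 ≤ j := jidx_pos ht0 ht1 n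
  have hj2 : j ≤ 2 ^ n := jidx_le ht0 ht1 n
  have hj1' : (1 : ℝ) ≤ (j : ℝ) := by exact_mod_cast hj1
  have hj2' : (j : ℝ) ≤ 2 ^ n := by exact_mod_cast hj2
  set a : ℝ := ((j : ℝ) - 1) / 2 ^ n with ha_def
  set b : ℝ := (j : ℝ) / 2 ^ n with hb_def
  have hab : b - a = 1 / 2 ^ n := by rw [ha_def, hb_def]; field_simp; ring
  have h0a : (0 : ℝ) ≤ a := div_nonneg (by linarith) hp.le
  have hab' : a ≤ b := by rw [ha_def, hb_def]; gcongr; linarith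
  have hb1 : b ≤ 1 := by rw [hb_def, div_le_one hp]; exact hj2'
  have hat : a < t := jidx_lb ht0 ht1 n
  have htb : t ≤ b := jidx_ub ht0 ht1 n
  have hsmall : (1 : ℝ) / 2 ^ n < δ := by
    calc (1 : ℝ) / 2 ^ n ≤ 1 / 2 ^ N := by
          gcongr <;> norm_num
      _ = (1 / 2 : ℝ) ^ N := by rw [div_pow, one_pow]
      _ < δ := hN
  have hfi : IntervalIntegrable f volume a b :=
    (hf.mono (by rw [uIcc_of_le hab']; exact Icc_subset_Icc h0a hb1)).intervalIntegrable
  have hconst : ∫ x in a..b, f t = (b - a) * f t := by simp [smul_eq_mul]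
  have key : dyA f t n - f t = 2 ^ n * ∫ x in a..b, (f x - f t) := by
    rw [intervalIntegral.integral_sub hfi intervalIntegrable_const, hconst, hab, dyA,
      ← ha_def, ← hb_def]
    field_simp
  have hbound : ∀ x ∈ Set.uIoc a b, ‖f x - f t‖ ≤ ε / 2 := by
    intro x hx
    rw [uIoc_of_le hab'] at hx
    have hx1 : x ∈ Icc (0 : ℝ) 1 := ⟨h0a.trans hx.1.le, hx.2.trans hb1⟩
    have hd : dist x t < δ := by
      rw [Real.dist_eq, abs_lt]
      constructor <;> nlinarith [hx.1, hx.2, hat, htb, hab, hsmall]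
    exact le_of_lt (hδ' x hx1 t htI hd)
  have hint := intervalIntegral.norm_integral_le_of_norm_le_const hbound
  rw [Real.norm_eq_abs, show |b - a| = 1 / 2 ^ n by
    rw [abs_of_nonneg (by linarith), hab]] at hint
  rw [Real.dist_eq, key, abs_mul, abs_of_pos hp]
  calc (2 : ℝ) ^ n * |∫ x in a..b, (f x - f t)| ≤ 2 ^ n * (ε / 2 * (1 / 2 ^ n)) :=
        mul_le_mul_of_nonneg_left hint hp.le
    _ = ε / 2 := by field_simp
    _ < ε := by linarith

end Dyadic

theorem abs_sub_dyadic_average_le (f : ℝ → ℝ) (hf : ContinuousOn f (Set.Icc 0 1))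
    (k : ℕ) (t : ℝ) (ht : 0 < t ∧ t ≤ 1) (j : ℕ) (hj : 1 ≤ j ∧ j ≤ 2 ^ k)
    (htj : ((j : ℝ) - 1) / 2 ^ k < t ∧ t ≤ (j : ℝ) / 2 ^ k)
    (hsum : Summable fun i : ℕ =>
      (2 : ℝ) ^ (((k + i : ℕ) : ℝ) / 2) * maxAbsCoef f (k + i)) :
    |f t - 2 ^ k * ∫ x in (((j : ℝ) - 1) / 2 ^ k)..((j : ℝ) / 2 ^ k), f x| ≤
      ∑' i : ℕ, (2 : ℝ) ^ (((k + i : ℕ) : ℝ) / 2) * maxAbsCoef f (k + i) := by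
  obtain ⟨ht0, ht1⟩ := ht
  obtain ⟨hj1, hj2⟩ := hj
  have hp : (0 : ℝ) < 2 ^ k := by positivity
  have hjeq : jidx t k = j := by
    have h1 : jidx t k ≤ j := Nat.ceil_le.mpr (by rw [← le_div_iff₀ hp]; exact htj.2)
    have h2 : j ≤ jidx t k := by
      by_contra hcon
      push_neg at hcon
      have hle : (jidx t k : ℝ) ≤ (j : ℝ) - 1 := by
        have h3 : jidx t k ≤ j - 1 := by omega
        have hc : ((j - 1 : ℕ) : ℝ) = (j : ℝ) - 1 := by
          rw [Nat.cast_sub hj1]; push_cast; ring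
        calc (jidx t k : ℝ) ≤ ((j - 1 : ℕ) : ℝ) := by exact_mod_cast h3
          _ = _ := hc
      have hub := jidx_ub ht0 ht1 k
      have hlb := htj.1
      rw [div_lt_iff₀ hp] at hlb
      rw [le_div_iff₀ hp] at hub
      nlinarith
    omega
  have hLHS : 2 ^ k * ∫ x in (((j : ℝ) - 1) / 2 ^ k)..((j : ℝ) / 2 ^ k), f x = dyA f t k := by
    rw [dyA, hjeq]
  set c : ℕ → ℝ := fun i => (2 : ℝ) ^ (((k + i : ℕ) : ℝ) / 2) * maxAbsCoef f (k + i) with hc_def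
  have hc0 : ∀ i, 0 ≤ c i := fun i =>
    mul_nonneg (Real.rpow_pos_of_pos two_pos _).le (maxAbsCoef_nonneg f _)
  have hpart : ∀ n, |dyA f t (k + n) - dyA f t k| ≤ ∑ i ∈ Finset.range n, c i := by
    intro n
    induction n with
    | zero => simp
    | succ n ih =>
      have hstep := dyA_step f ht0 ht1 hf (k + n)
      rw [Finset.sum_range_succ]
      calc |dyA f t (k + (n + 1)) - dyA f t k|
          ≤ |dyA f t (k + n + 1) - dyA f t (k + n)| + |dyA f t (k + n) - dyA f t k| := by
            rw [show k + (n + 1) = k + n + 1 by ring]; exact abs_sub_le _ _ _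
        _ ≤ c n + ∑ i ∈ Finset.range n, c i := add_le_add hstep ih
        _ = _ := by ring
  have hsumle : ∀ n, |dyA f t (k + n) - dyA f t k| ≤ ∑' i, c i := fun n =>
    (hpart n).trans (Summable.sum_le_tsum _ (fun i _ => hc0 i) hsum)
  have htend : Tendsto (fun n => |dyA f t (k + n) - dyA f t k|) atTop
      (nhds |f t - dyA f t k|) := by
    have h1 : Tendsto (fun n => dyA f t (k + n)) atTop (nhds (f t)) := by
      have := (dyA_tendsto f ht0 ht1 hf).comp (Filter.tendsto_add_atTop_nat k)
      simpa [Function.comp_def, add_comm] using this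
    exact (h1.sub tendsto_const_nhds).abs
  rw [hLHS]
  exact le_of_tendsto htend (Filter.Eventually.of_forall hsumle)
end

section
/- Let M > 0, α₁ > 1, and let τ : ℝ → ℝ be differentiable on [0,1] with |τ′(t)| ≤ M for all t ∈ [0,1] and |τ′(t) − τ′(s)| ≤ M·|t − s|^{α₁−1} for all t, s ∈ [0,1]. For an integer m ≥ 3 define the local averages a_ℓ = m·∫_{(ℓ−1)/m}^{ℓ/m} τ(t) dt for ℓ = 1, …, m. Then for every ℓ with 2 ≤ ℓ ≤ m − 1, the second difference satisfies |a_{ℓ+1} − 2a_ℓ + a_{ℓ−1}| ≤ 5M·m^{−α₁}. -/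
open MeasureTheory Real Set intervalIntegral

theorem second_difference_of_local_averages_le (M α₁ : ℝ) (hM : 0 < M) (hα₁ : 1 < α₁)
    (τ : ℝ → ℝ) (hdiff : ∀ t ∈ Set.Icc (0 : ℝ) 1, DifferentiableAt ℝ τ t)
    (hbd : ∀ t ∈ Set.Icc (0 : ℝ) 1, |deriv τ t| ≤ M)
    (hholder : ∀ t ∈ Set.Icc (0 : ℝ) 1, ∀ s ∈ Set.Icc (0 : ℝ) 1,
      |deriv τ t - deriv τ s| ≤ M * |t - s| ^ (α₁ - 1))
    (m : ℕ) (hm : 3 ≤ m) (a : ℕ → ℝ)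
    (ha : ∀ ℓ, a ℓ = m * ∫ t in (((ℓ : ℝ) - 1) / m)..((ℓ : ℝ) / m), τ t)
    (ℓ : ℕ) (hℓ : 2 ≤ ℓ) (hℓm : ℓ + 1 ≤ m) :
    |a (ℓ + 1) - 2 * a ℓ + a (ℓ - 1)| ≤ 5 * M * (m : ℝ) ^ (-α₁) := by
  have hm' : (3:ℝ) ≤ (m:ℝ) := by exact_mod_cast hm
  have hn : (0:ℝ) < (m:ℝ) := by linarith
  set n : ℝ := (m:ℝ) with hndef
  set h : ℝ := 1 / n with hhdef
  have hhpos : 0 < h := by positivity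
  have hα : 0 < α₁ - 1 := by linarith
  have hℓ2 : (2:ℝ) ≤ (ℓ:ℝ) := by exact_mod_cast hℓ
  have hℓm' : (ℓ:ℝ) + 1 ≤ n := by rw [hndef]; exact_mod_cast hℓm
  set u : ℝ := ((ℓ:ℝ) - 1) / n with hudef
  set v : ℝ := (ℓ:ℝ) / n with hvdef
  have huv : u + h = v := by rw [hudef, hvdef, hhdef]; field_simp; ring
  have huh : u - h = ((ℓ:ℝ) - 2) / n := by rw [hudef, hhdef]; field_simp; ring
  have hu0 : 0 ≤ u - h := by rw [huh]; apply div_nonneg (by linarith) hn.le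
  have hv1 : v + h ≤ 1 := by
    rw [hvdef, hhdef, ← add_div, div_le_one hn]; linarith
  have huv' : u ≤ v := by linarith
  -- continuity of τ on [0,1]
  have hτc : ContinuousOn τ (Icc 0 1) :=
    fun t ht => (hdiff t ht).continuousAt.continuousWithinAt
  -- continuity of deriv τ on [0,1]
  have hdc : ContinuousOn (deriv τ) (Icc 0 1) := by
    intro t ht
    rw [ContinuousWithinAt, tendsto_iff_dist_tendsto_zero]
    have h0 : Filter.Tendsto (fun s => M * |s - t| ^ (α₁ - 1)) (nhdsWithin t (Icc (0:ℝ) 1)) (nhds 0) := by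
      have h1 : Filter.Tendsto (fun s : ℝ => |s - t|) (nhdsWithin t (Icc (0:ℝ) 1)) (nhds 0) := by
        have := ((continuous_id.sub (continuous_const (y := t))).abs.tendsto t)
        simpa using this.mono_left nhdsWithin_le_nhds
      have h2 := (Real.continuousAt_rpow_const 0 (α₁-1) (Or.inr hα.le)).tendsto.comp h1
      simpa [Real.zero_rpow hα.ne'] using h2.const_mul M
    refine squeeze_zero' (Filter.Eventually.of_forall fun s => dist_nonneg) ?_ h0
    filter_upwards [self_mem_nhdsWithin] with s hs
    rw [Real.dist_eq]
    exact hholder s hs t ht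
  -- rewrite the three averages
  have e1 : a (ℓ + 1) = n * ∫ t in v..(v + h), τ t := by
    rw [ha]; push_cast
    rw [show ((ℓ:ℝ) + 1 - 1) / n = v from by rw [hvdef]; ring,
      show ((ℓ:ℝ) + 1) / n = v + h from by rw [hvdef, hhdef]; field_simp]
  have e2 : a ℓ = n * ∫ t in u..v, τ t := by rw [ha]
  have e3 : a (ℓ - 1) = n * ∫ t in (u - h)..u, τ t := by
    rw [ha]
    rw [Nat.cast_sub (by omega : 1 ≤ ℓ)]
    push_cast
    rw [show ((ℓ:ℝ) - 1 - 1) / n = u - h from by rw [huh]; ring,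
      show ((ℓ:ℝ) - 1) / n = u from rfl]
  -- shift the integrals
  have s1 : (∫ t in u..v, τ (t + h)) = ∫ t in v..(v + h), τ t := by
    rw [intervalIntegral.integral_comp_add_right, huv]
  have s2 : (∫ t in u..v, τ (t - h)) = ∫ t in (u - h)..u, τ t := by
    rw [intervalIntegral.integral_comp_sub_right]
    congr 1
    linarith
  -- integrabilities on [u,v]
  have hsub0 : Icc u v ⊆ Icc (0:ℝ) 1 := Icc_subset_Icc (by linarith) (by linarith)
  have hI0 : IntervalIntegrable τ volume u v :=
    (hτc.mono hsub0).intervalIntegrable_of_Icc huv'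
  have hI1 : IntervalIntegrable (fun t => τ (t + h)) volume u v := by
    apply ContinuousOn.intervalIntegrable_of_Icc huv'
    apply hτc.comp (continuous_id.add continuous_const).continuousOn
    intro x hx
    simp only [Set.mem_Icc] at hx ⊢
    constructor <;> simp only [Pi.add_apply, Pi.sub_apply, id_eq] <;> linarith [hx.1, hx.2, hhdef]
  have hI2 : IntervalIntegrable (fun t => τ (t - h)) volume u v := by
    apply ContinuousOn.intervalIntegrable_of_Icc huv'
    apply hτc.comp (continuous_id.sub continuous_const).continuousOn
    intro x hx
    simp only [Set.mem_Icc] at hx ⊢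
    constructor <;> simp only [Pi.add_apply, Pi.sub_apply, id_eq] <;> linarith [hx.1, hx.2, hhdef]
  -- combine into one integral
  have comb : a (ℓ + 1) - 2 * a ℓ + a (ℓ - 1)
      = n * ∫ t in u..v, (τ (t + h) - 2 * τ t + τ (t - h)) := by
    rw [e1, e2, e3, ← s1, ← s2]
    rw [intervalIntegral.integral_add (hI1.sub (hI0.const_mul 2)) hI2,
      intervalIntegral.integral_sub hI1 (hI0.const_mul 2),
      intervalIntegral.integral_const_mul]
    ring
  -- pointwise bound on the second difference
  have key : ∀ t ∈ Icc u v, |τ (t + h) - 2 * τ t + τ (t - h)| ≤ M * h ^ (α₁ - 1) * h := by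
    intro t ht
    have ht0 : 0 ≤ t - h := by linarith [ht.1]
    have ht1 : t + h ≤ 1 := by linarith [ht.2]
    have hsub1 : Icc t (t + h) ⊆ Icc (0:ℝ) 1 :=
      Icc_subset_Icc (by linarith) (by linarith)
    have hsub2 : Icc (t - h) t ⊆ Icc (0:ℝ) 1 :=
      Icc_subset_Icc (by linarith) (by linarith)
    have ftc1 : (∫ s in t..(t + h), deriv τ s) = τ (t + h) - τ t := by
      apply intervalIntegral.integral_deriv_eq_sub
      · intro x hx
        rw [uIcc_of_le (by linarith)] at hx
        exact hdiff x (hsub1 hx)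
      · apply ContinuousOn.intervalIntegrable
        rw [uIcc_of_le (by linarith)]
        exact hdc.mono hsub1
    have ftc2 : (∫ s in (t - h)..t, deriv τ s) = τ t - τ (t - h) := by
      apply intervalIntegral.integral_deriv_eq_sub
      · intro x hx
        rw [uIcc_of_le (by linarith)] at hx
        exact hdiff x (hsub2 hx)
      · apply ContinuousOn.intervalIntegrable
        rw [uIcc_of_le (by linarith)]
        exact hdc.mono hsub2
    have shift : (∫ s in t..(t + h), deriv τ (s - h)) = ∫ s in (t - h)..t, deriv τ s := by
      rw [intervalIntegral.integral_comp_sub_right]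
      congr 1
      ring
    have hJ1 : IntervalIntegrable (deriv τ) volume t (t + h) := by
      apply ContinuousOn.intervalIntegrable
      rw [uIcc_of_le (by linarith)]
      exact hdc.mono hsub1
    have hJ2 : IntervalIntegrable (fun s => deriv τ (s - h)) volume t (t + h) := by
      apply ContinuousOn.intervalIntegrable
      rw [uIcc_of_le (by linarith)]
      apply hdc.comp (continuous_id.sub continuous_const).continuousOn
      intro x hx
      simp only [Set.mem_Icc] at hx ⊢
      constructor <;> simp only [Pi.add_apply, Pi.sub_apply, id_eq] <;> linarith [hx.1, hx.2, hhdef]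
    have eq2 : τ (t + h) - 2 * τ t + τ (t - h)
        = ∫ s in t..(t + h), (deriv τ s - deriv τ (s - h)) := by
      rw [intervalIntegral.integral_sub hJ1 hJ2, ftc1, shift, ftc2]
      ring
    rw [eq2, ← Real.norm_eq_abs]
    have hb : ∀ s ∈ Set.uIoc t (t + h), ‖deriv τ s - deriv τ (s - h)‖ ≤ M * h ^ (α₁ - 1) := by
      intro s hs
      rw [Set.uIoc_of_le (by linarith)] at hs
      have hs1 : s ∈ Icc (0:ℝ) 1 := ⟨by linarith [hs.1], by linarith [hs.2]⟩
      have hs2 : s - h ∈ Icc (0:ℝ) 1 := ⟨by linarith [hs.1], by linarith [hs.2]⟩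
      have := hholder s hs1 (s - h) hs2
      rw [Real.norm_eq_abs]
      calc |deriv τ s - deriv τ (s - h)| ≤ M * |s - (s - h)| ^ (α₁ - 1) := this
        _ = M * h ^ (α₁ - 1) := by rw [show s - (s - h) = h from by ring, abs_of_pos hhpos]
    calc ‖∫ s in t..(t + h), (deriv τ s - deriv τ (s - h))‖
        ≤ M * h ^ (α₁ - 1) * |t + h - t| := intervalIntegral.norm_integral_le_of_norm_le_const hb
      _ = M * h ^ (α₁ - 1) * h := by rw [show t + h - t = h from by ring, abs_of_pos hhpos]
  -- final bound
  have hout : |∫ t in u..v, (τ (t + h) - 2 * τ t + τ (t - h))| ≤ M * h ^ (α₁ - 1) * h * h := by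
    rw [← Real.norm_eq_abs]
    have hb : ∀ t ∈ Set.uIoc u v, ‖τ (t + h) - 2 * τ t + τ (t - h)‖ ≤ M * h ^ (α₁ - 1) * h := by
      intro t ht
      rw [Set.uIoc_of_le huv'] at ht
      exact key t ⟨le_of_lt ht.1, ht.2⟩
    calc ‖∫ t in u..v, (τ (t + h) - 2 * τ t + τ (t - h))‖
        ≤ M * h ^ (α₁ - 1) * h * |v - u| := intervalIntegral.norm_integral_le_of_norm_le_const hb
      _ = M * h ^ (α₁ - 1) * h * h := by rw [show v - u = h from by linarith, abs_of_pos hhpos]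
  have hfin : |a (ℓ + 1) - 2 * a ℓ + a (ℓ - 1)| ≤ M * h ^ α₁ := by
    rw [comb, abs_mul, abs_of_pos hn]
    calc n * |∫ t in u..v, (τ (t + h) - 2 * τ t + τ (t - h))|
        ≤ n * (M * h ^ (α₁ - 1) * h * h) := by
          exact mul_le_mul_of_nonneg_left hout hn.le
      _ = M * (h ^ (α₁ - 1) * h) * (n * h) := by ring
      _ = M * h ^ α₁ := by
          rw [show n * h = 1 from by rw [hhdef]; field_simp, mul_one]
          congr 1
          rw [show h ^ (α₁ - 1) * h = h ^ (α₁ - 1) * h ^ (1:ℝ) from by rw [Real.rpow_one],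
            ← Real.rpow_add hhpos]
          norm_num
  have hpow : h ^ α₁ = n ^ (-α₁) := by
    rw [hhdef, one_div, Real.inv_rpow hn.le, ← Real.rpow_neg hn.le]
  have hposp : 0 < n ^ (-α₁) := Real.rpow_pos_of_pos hn _
  calc |a (ℓ + 1) - 2 * a ℓ + a (ℓ - 1)| ≤ M * h ^ α₁ := hfin
    _ = M * n ^ (-α₁) := by rw [hpow]
    _ ≤ 5 * M * n ^ (-α₁) := by nlinarith
end
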